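/- arXiv:1907.08318 — 5 statements merged into one kernel-verified Lean document; each statement's English description precedes it below -/
import Mathlib

section
/- Let g : E₂ → ℝ ∪ {+∞} be a closed, proper, convex function, let f : E₁ → ℝ ∪ {+∞} be a closed, proper, convex function, and let F : E₁ → E₂ be continuous. Suppose F is convex with respect to −hzn g, i.e. for all x₁, x₂ ∈ E₁ and λ ∈ [0,1] one has F((1−λ)x₁ + λx₂) − [(1−λ)F(x₁) + λF(x₂)] ∈ hzn g. Then the function Φ : E₁ → ℝ ∪ {+∞} defined by Φ(x) = f(x) + g(F(x)) is convex. -/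
open scoped RealInnerProductSpace Pointwise
open Filter

noncomputable section

/-- Convexity of an extended-real-valued function, defined via convexity of its epigraph. -/
def EConvexOn {E : Type*} [AddCommGroup E] [Module ℝ E] (f : E → EReal) : Prop :=
  Convex ℝ {p : E × ℝ | f p.1 ≤ (p.2 : EReal)}

/-- Closedness (lower semicontinuity) of an extended-real-valued function,
defined via closedness of its epigraph. -/
def EClosed {E : Type*} [TopologicalSpace E] (f : E → EReal) : Prop :=
  IsClosed {p : E × ℝ | f p.1 ≤ (p.2 : EReal)}

/-- Properness: the domain is nonempty and the function never takes the value `-∞`. -/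
def EProper {E : Type*} (f : E → EReal) : Prop :=
  (∃ x, f x < ⊤) ∧ ∀ x, f x ≠ ⊥

/-- The (effective) domain of an extended-real-valued function. -/
def edom {E : Type*} (f : E → EReal) : Set E := {x | f x < ⊤}

/-- The Fenchel conjugate. -/
def econj {E : Type*} [NormedAddCommGroup E] [InnerProductSpace ℝ E]
    (f : E → EReal) (y : E) : EReal :=
  ⨆ x, ((⟪y, x⟫ : ℝ) : EReal) - f x

/-- The convex subdifferential of `f` at `x₀`. -/
def esubdiff {E : Type*} [NormedAddCommGroup E] [InnerProductSpace ℝ E]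
    (f : E → EReal) (x₀ : E) : Set E :=
  {w | ∀ x, f x₀ + ((⟪w, x - x₀⟫ : ℝ) : EReal) ≤ f x}

/-- `K` is a cone: it is stable under multiplication by nonnegative scalars. -/
def IsCone {E : Type*} [SMul ℝ E] (K : Set E) : Prop :=
  ∀ ⦃t : ℝ⦄, 0 ≤ t → ∀ ⦃x⦄, x ∈ K → t • x ∈ K

/-- The polar cone `K° = {v : ⟪v,x⟫ ≤ 0 for all x ∈ K}`. -/
def polarCone {E : Type*} [NormedAddCommGroup E] [InnerProductSpace ℝ E] (K : Set E) : Set E :=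
  {v | ∀ x ∈ K, ⟪v, x⟫ ≤ (0 : ℝ)}

/-- The `K`-epigraph of a map `F` with domain `D`. -/
def epiK {E₁ E₂ : Type*} [AddCommGroup E₂] (K : Set E₂) (D : Set E₁) (F : E₁ → E₂) :
    Set (E₁ × E₂) :=
  {p | p.1 ∈ D ∧ p.2 - F p.1 ∈ K}

/-- The graph of a map `F` with domain `D`. -/
def gphF {E₁ E₂ : Type*} (D : Set E₁) (F : E₁ → E₂) : Set (E₁ × E₂) :=
  {p | p.1 ∈ D ∧ p.2 = F p.1}

open Classical in
/-- The scalarization `⟨v,F⟩` of the map `F` with domain `D`: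
it equals `⟪v, F x⟫` on `D` and `+∞` elsewhere. -/
def scal {E₁ E₂ : Type*} [NormedAddCommGroup E₂] [InnerProductSpace ℝ E₂]
    (v : E₂) (D : Set E₁) (F : E₁ → E₂) : E₁ → EReal :=
  fun x => if x ∈ D then ((⟪v, F x⟫ : ℝ) : EReal) else ⊤

open Classical in
/-- The composition `g ∘ F` for a map `F` with domain `D`:
it equals `g (F x)` on `D` and `+∞` elsewhere. -/
def compFn {E₁ E₂ : Type*} (g : E₂ → EReal) (D : Set E₁) (F : E₁ → E₂) : E₁ → EReal :=
  fun x => if x ∈ D then g (F x) else ⊤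

open Classical in
/-- The indicator function of a set: `0` on `S` and `+∞` off `S`. -/
def eindicator {E : Type*} (S : Set E) (x : E) : EReal := if x ∈ S then 0 else ⊤

/-- The support function of a set. -/
def suppFn {E : Type*} [NormedAddCommGroup E] [InnerProductSpace ℝ E] (S : Set E) (y : E) :
    EReal :=
  ⨆ x ∈ S, ((⟪x, y⟫ : ℝ) : EReal)

/-- The support function of a subset of a product of two inner product spaces,
with respect to the natural sum inner product on the product. -/
def suppFn2 {E₁ E₂ : Type*} [NormedAddCommGroup E₁] [InnerProductSpace ℝ E₁]
    [NormedAddCommGroup E₂] [InnerProductSpace ℝ E₂]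
    (S : Set (E₁ × E₂)) (y : E₁ × E₂) : EReal :=
  ⨆ p ∈ S, ((⟪p.1, y.1⟫ + ⟪p.2, y.2⟫ : ℝ) : EReal)

/-- The horizon (recession) cone of a set `C`. -/
def horizonCone {E : Type*} [AddCommGroup E] [Module ℝ E] [TopologicalSpace E] (C : Set E) :
    Set E :=
  {w | ∀ x ∈ C, ∀ t : ℝ, 0 ≤ t → x + t • w ∈ closure C}

/-- The lower semicontinuous hull:
`(cl f)(x) = inf {a : ∃ xₖ → x with f (xₖ) → a}`. -/
def lscHull {E : Type*} [TopologicalSpace E] (f : E → EReal) (x : E) : EReal :=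
  sInf {a : EReal |
    ∃ u : ℕ → E, Tendsto u atTop (nhds x) ∧ Tendsto (fun n => f (u n)) atTop (nhds a)}

variable {E E₁ E₂ : Type*}
  [NormedAddCommGroup E] [InnerProductSpace ℝ E] [FiniteDimensional ℝ E]
  [NormedAddCommGroup E₁] [InnerProductSpace ℝ E₁] [FiniteDimensional ℝ E₁]
  [NormedAddCommGroup E₂] [InnerProductSpace ℝ E₂] [FiniteDimensional ℝ E₂]


/-- If a closed convex set contains a ray `x₀ + t•d` from one of its points,
then `y + d ∈ S` for every `y ∈ S`. -/
lemma recession_transfer {E : Type*} [NormedAddCommGroup E] [NormedSpace ℝ E]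
    {S : Set E} (hS : IsClosed S) (hconv : Convex ℝ S) {x₀ d : E}
    (hx₀ : ∀ t : ℝ, 0 ≤ t → x₀ + t • d ∈ S) {y : E} (hy : y ∈ S) :
    y + d ∈ S := by
  set u : ℕ → E := fun n => y + d + ((1:ℝ)/(n+1)) • (x₀ - y) with hu
  have hmem : ∀ n : ℕ, u n ∈ S := by
    intro n
    have hpos : (0:ℝ) < (n:ℝ) + 1 := by positivity
    have hle : (1:ℝ)/(n+1) ≤ 1 := by
      rw [div_le_one hpos]; linarith [Nat.cast_nonneg (α := ℝ) n]
    have h1 : (0:ℝ) ≤ 1 - 1/(n+1) := by linarith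
    have h2 : (0:ℝ) ≤ 1/(n+1) := by positivity
    have := hconv hy (hx₀ ((n:ℝ)+1) (le_of_lt hpos)) h1 h2 (by ring)
    have heq : (1 - (1:ℝ)/(n+1)) • y + ((1:ℝ)/(n+1)) • (x₀ + ((n:ℝ)+1) • d) = u n := by
      rw [hu]; match_scalars <;> field_simp <;> ring
    rwa [heq] at this
  have htend : Tendsto u atTop (nhds (y + d)) := by
    have h0 : Tendsto (fun n : ℕ => (1:ℝ)/(n+1)) atTop (nhds 0) :=
      tendsto_one_div_add_atTop_nhds_zero_nat
    have : Tendsto (fun n : ℕ => ((1:ℝ)/(n+1)) • (x₀ - y)) atTop (nhds ((0:ℝ) • (x₀ - y))) :=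
      h0.smul_const _
    rw [zero_smul] at this
    simpa [hu] using (tendsto_const_nhds (x := y + d)).add this
  exact hS.mem_of_tendsto htend (Eventually.of_forall hmem)

/-- If `g` is closed, proper and convex, `f` is closed, proper and convex,
`F` is continuous and convex with respect to `-hzn g`, then `Φ = f + g ∘ F` is convex. -/
theorem convexity_of_convex_composite
    (f : E₁ → EReal) (g : E₂ → EReal) (F : E₁ → E₂)
    (hf_closed : EClosed f) (hf_proper : EProper f) (hf_conv : EConvexOn f)
    (hg_closed : EClosed g) (hg_proper : EProper g) (hg_conv : EConvexOn g)
    (hF_cont : Continuous F)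
    (α : ℝ) (hα : {y : E₂ | g y ≤ (α : EReal)}.Nonempty)
    (hFK : ∀ x₁ x₂ : E₁, ∀ l : ℝ, l ∈ Set.Icc (0 : ℝ) 1 →
      F ((1 - l) • x₁ + l • x₂) - ((1 - l) • F x₁ + l • F x₂)
        ∈ horizonCone {y : E₂ | g y ≤ (α : EReal)}) :
    EConvexOn (fun x => f x + g (F x)) := by
  intro p hp q hq a b ha hb hab
  simp only [Set.mem_setOf_eq] at hp hq ⊢
  have hfp : f p.1 ≠ ⊤ := by
    intro h
    rw [h, EReal.top_add_of_ne_bot (hg_proper.2 _)] at hp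
    exact (EReal.coe_lt_top p.2).not_ge hp
  have hgp : g (F p.1) ≠ ⊤ := by
    intro h
    rw [h, EReal.add_top_of_ne_bot (hf_proper.2 _)] at hp
    exact (EReal.coe_lt_top p.2).not_ge hp
  have hfq : f q.1 ≠ ⊤ := by
    intro h
    rw [h, EReal.top_add_of_ne_bot (hg_proper.2 _)] at hq
    exact (EReal.coe_lt_top q.2).not_ge hq
  have hgq : g (F q.1) ≠ ⊤ := by
    intro h
    rw [h, EReal.add_top_of_ne_bot (hf_proper.2 _)] at hq
    exact (EReal.coe_lt_top q.2).not_ge hq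
  set a₁ := (f p.1).toReal with ha₁def
  set a₂ := (f q.1).toReal with ha₂def
  set b₁ := (g (F p.1)).toReal with hb₁def
  set b₂ := (g (F q.1)).toReal with hb₂def
  have ha₁ : (a₁ : EReal) = f p.1 := EReal.coe_toReal hfp (hf_proper.2 _)
  have ha₂ : (a₂ : EReal) = f q.1 := EReal.coe_toReal hfq (hf_proper.2 _)
  have hb₁ : (b₁ : EReal) = g (F p.1) := EReal.coe_toReal hgp (hg_proper.2 _)
  have hb₂ : (b₂ : EReal) = g (F q.1) := EReal.coe_toReal hgq (hg_proper.2 _)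
  have hpR : a₁ + b₁ ≤ p.2 := by
    rw [← ha₁, ← hb₁, ← EReal.coe_add, EReal.coe_le_coe_iff] at hp; exact hp
  have hqR : a₂ + b₂ ≤ q.2 := by
    rw [← ha₂, ← hb₂, ← EReal.coe_add, EReal.coe_le_coe_iff] at hq; exact hq
  have hfc : f (a • p.1 + b • q.1) ≤ ((a * a₁ + b * a₂ : ℝ) : EReal) := by
    have h1 : ((p.1, a₁) : E₁ × ℝ) ∈ {p : E₁ × ℝ | f p.1 ≤ (p.2 : EReal)} := le_of_eq ha₁.symm
    have h2 : ((q.1, a₂) : E₁ × ℝ) ∈ {p : E₁ × ℝ | f p.1 ≤ (p.2 : EReal)} := le_of_eq ha₂.symm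
    have := hf_conv h1 h2 ha hb hab
    simpa [Prod.smul_def, smul_eq_mul] using this
  set z := a • F p.1 + b • F q.1 with hz
  have hgc : g z ≤ ((a * b₁ + b * b₂ : ℝ) : EReal) := by
    have h1 : ((F p.1, b₁) : E₂ × ℝ) ∈ {p : E₂ × ℝ | g p.1 ≤ (p.2 : EReal)} := le_of_eq hb₁.symm
    have h2 : ((F q.1, b₂) : E₂ × ℝ) ∈ {p : E₂ × ℝ | g p.1 ≤ (p.2 : EReal)} := le_of_eq hb₂.symm
    have := hg_conv h1 h2 ha hb hab
    simpa [hz, Prod.smul_def, smul_eq_mul] using this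
  set C := {y : E₂ | g y ≤ (α : EReal)} with hC
  have hCclosed : IsClosed C := by
    have : C = (fun y : E₂ => (y, α)) ⁻¹' {p : E₂ × ℝ | g p.1 ≤ (p.2 : EReal)} := rfl
    rw [this]
    exact hg_closed.preimage (continuous_id.prodMk continuous_const)
  set w := F (a • p.1 + b • q.1) - z with hw
  have hwmem : w ∈ horizonCone C := by
    have hb01 : b ∈ Set.Icc (0:ℝ) 1 := ⟨hb, by linarith⟩
    have := hFK p.1 q.1 b hb01
    have hab' : (1 : ℝ) - b = a := by linarith
    rwa [hab'] at this
  obtain ⟨y₀, hy₀⟩ := hα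
  have hray : ∀ t : ℝ, 0 ≤ t →
      ((y₀, α) : E₂ × ℝ) + t • ((w, 0) : E₂ × ℝ) ∈ {p : E₂ × ℝ | g p.1 ≤ (p.2 : EReal)} := by
    intro t ht
    have : y₀ + t • w ∈ closure C := hwmem y₀ hy₀ t ht
    rw [hCclosed.closure_eq] at this
    simpa [hC, Prod.smul_def, smul_eq_mul] using this
  have hzmem : ((z, a * b₁ + b * b₂) : E₂ × ℝ) ∈ {p : E₂ × ℝ | g p.1 ≤ (p.2 : EReal)} := hgc
  have hfinal := recession_transfer hg_closed hg_conv hray hzmem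
  have hzw : z + w = F (a • p.1 + b • q.1) := by rw [hw]; abel
  have hgF : g (F (a • p.1 + b • q.1)) ≤ ((a * b₁ + b * b₂ : ℝ) : EReal) := by
    have : ((z, a * b₁ + b * b₂) : E₂ × ℝ) + (w, 0) = (F (a • p.1 + b • q.1), a * b₁ + b * b₂) := by
      rw [Prod.mk_add_mk, hzw, add_zero]
    rw [this] at hfinal
    exact hfinal
  have hsum : f (a • p.1 + b • q.1) + g (F (a • p.1 + b • q.1))
      ≤ ((a * a₁ + b * a₂ : ℝ) : EReal) + ((a * b₁ + b * b₂ : ℝ) : EReal) :=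
    add_le_add hfc hgF
  have hR : (a * a₁ + b * a₂) + (a * b₁ + b * b₂) ≤ a * p.2 + b * q.2 := by
    have h1 : a * (a₁ + b₁) ≤ a * p.2 := mul_le_mul_of_nonneg_left hpR ha
    have h2 : b * (a₂ + b₂) ≤ b * q.2 := mul_le_mul_of_nonneg_left hqR hb
    nlinarith [h1, h2]
  calc f ((a • p + b • q).1) + g (F ((a • p + b • q).1))
      = f (a • p.1 + b • q.1) + g (F (a • p.1 + b • q.1)) := rfl
    _ ≤ ((a * a₁ + b * a₂ : ℝ) : EReal) + ((a * b₁ + b * b₂ : ℝ) : EReal) := hsum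
    _ = (((a * a₁ + b * a₂) + (a * b₁ + b * b₂) : ℝ) : EReal) := (EReal.coe_add _ _).symm
    _ ≤ ((a * p.2 + b * q.2 : ℝ) : EReal) := EReal.coe_le_coe_iff.mpr hR
    _ = (((a • p + b • q).2 : ℝ) : EReal) := by
        simp [Prod.smul_def, smul_eq_mul]
end
end

section
/- Let K ⊆ E₂ be a convex cone and let F be a proper K-convex map with domain dom F ⊆ E₁. Then ri(epi_K F) = {(x,v) ∈ E₁ × E₂ : x ∈ ri(dom F), v − F(x) ∈ ri K}. In particular, if dom F = E₁, then ri(epi_K F) = {(x,v) : v − F(x) ∈ ri K}. -/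
open scoped RealInnerProductSpace Pointwise
open Filter

noncomputable section

variable {E E₁ E₂ : Type*}
  [NormedAddCommGroup E] [InnerProductSpace ℝ E] [FiniteDimensional ℝ E]
  [NormedAddCommGroup E₁] [InnerProductSpace ℝ E₁] [FiniteDimensional ℝ E₁]
  [NormedAddCommGroup E₂] [InnerProductSpace ℝ E₂] [FiniteDimensional ℝ E₂]


theorem riAux.mem_ri_iff {V : Type*} [NormedAddCommGroup V] [NormedSpace ℝ V] {s : Set V} {x : V} :
    x ∈ intrinsicInterior ℝ s ↔
      x ∈ s ∧ ∃ ε > 0, ∀ y ∈ affineSpan ℝ s, dist y x < ε → y ∈ s := by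
  rw [mem_intrinsicInterior]
  constructor
  · rintro ⟨⟨y, hy⟩, hyint, rfl⟩
    refine ⟨interior_subset (s := (Subtype.val ⁻¹' s : Set (affineSpan ℝ s))) hyint, ?_⟩
    rw [mem_interior_iff_mem_nhds, Metric.mem_nhds_iff] at hyint
    obtain ⟨ε, hε, hball⟩ := hyint
    refine ⟨ε, hε, fun z hz hd => ?_⟩
    exact hball (show (⟨z, hz⟩ : affineSpan ℝ s) ∈ Metric.ball _ _ by
      simpa [Metric.mem_ball, Subtype.dist_eq] using hd)
  · rintro ⟨hxs, ε, hε, h⟩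
    refine ⟨⟨x, subset_affineSpan ℝ s hxs⟩, ?_, rfl⟩
    rw [mem_interior_iff_mem_nhds, Metric.mem_nhds_iff]
    exact ⟨ε, hε, fun z hz => h z.1 z.2 (by simpa [Metric.mem_ball, Subtype.dist_eq] using hz)⟩

theorem riAux.combo_mem_ri {V : Type*} [NormedAddCommGroup V] [NormedSpace ℝ V] {s : Set V}
    (hs : Convex ℝ s) {x y : V} (hx : x ∈ intrinsicInterior ℝ s) (hy : y ∈ s)
    {l : ℝ} (h0 : 0 ≤ l) (h1 : l < 1) : (1 - l) • x + l • y ∈ intrinsicInterior ℝ s := by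
  rw [riAux.mem_ri_iff] at hx ⊢
  obtain ⟨hxs, ε, hε, hball⟩ := hx
  have h1l : (0:ℝ) < 1 - l := by linarith
  have hz : (1 - l) • x + l • y ∈ s := hs hxs hy (le_of_lt h1l) h0 (by ring)
  refine ⟨hz, (1 - l) * ε, by positivity, fun w hw hd => ?_⟩
  set z := (1 - l) • x + l • y with hzdef
  have hx'span : x + (1 - l)⁻¹ • (w - z) ∈ affineSpan ℝ s := by
    have := AffineSubspace.smul_vsub_vadd_mem (affineSpan ℝ s) (1 - l)⁻¹ hw
      (subset_affineSpan ℝ s hz) (subset_affineSpan ℝ s hxs)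
    simpa [vsub_eq_sub, vadd_eq_add, add_comm] using this
  have hd' : dist (x + (1 - l)⁻¹ • (w - z)) x < ε := by
    rw [dist_eq_norm, add_sub_cancel_left, norm_smul, Real.norm_eq_abs,
      abs_of_pos (by positivity : (0:ℝ) < (1 - l)⁻¹)]
    rw [dist_eq_norm] at hd
    rw [inv_mul_lt_iff₀ h1l]
    linarith [hd]
  have hx's : x + (1 - l)⁻¹ • (w - z) ∈ s := hball _ hx'span hd'
  have hwe : w = (1 - l) • (x + (1 - l)⁻¹ • (w - z)) + l • y := by
    rw [smul_add, smul_smul, mul_inv_cancel₀ (ne_of_gt h1l), one_smul, hzdef]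
    abel
  rw [hwe]
  exact hs hx's hy (le_of_lt h1l) h0 (by ring)

theorem riAux.mem_ri_iff_prolong {V : Type*} [NormedAddCommGroup V] [NormedSpace ℝ V]
    [FiniteDimensional ℝ V] {s : Set V} (hs : Convex ℝ s) (hne : s.Nonempty) {z : V} :
    z ∈ intrinsicInterior ℝ s ↔ z ∈ s ∧ ∀ y ∈ s, ∃ μ : ℝ, 1 < μ ∧ y + μ • (z - y) ∈ s := by
  constructor
  · intro hz
    have hzs := intrinsicInterior_subset hz
    refine ⟨hzs, fun y hy => ?_⟩
    rw [riAux.mem_ri_iff] at hz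
    obtain ⟨-, ε, hε, hball⟩ := hz
    set δ := ε / (2 * (‖z - y‖ + 1)) with hδdef
    have hn : (0:ℝ) < ‖z - y‖ + 1 := by positivity
    have hδ : 0 < δ := by positivity
    refine ⟨1 + δ, by linarith, ?_⟩
    have hw : y + (1 + δ) • (z - y) = z + δ • (z - y) := by
      rw [add_smul, one_smul]; abel
    rw [hw]
    refine hball _ ?_ ?_
    · have := AffineSubspace.smul_vsub_vadd_mem (affineSpan ℝ s) δ
        (subset_affineSpan ℝ s hzs) (subset_affineSpan ℝ s hy) (subset_affineSpan ℝ s hzs)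
      simpa [vsub_eq_sub, vadd_eq_add, add_comm] using this
    · rw [dist_eq_norm, add_sub_cancel_left, norm_smul, Real.norm_eq_abs, abs_of_pos hδ]
      have h2 : δ * (‖z - y‖ + 1) = ε / 2 := by
        rw [hδdef]; field_simp
      nlinarith [norm_nonneg (z - y)]
  · rintro ⟨hz, h⟩
    obtain ⟨p, hp⟩ := Set.Nonempty.intrinsicInterior hs hne
    obtain ⟨μ, hμ, hmem⟩ := h p (intrinsicInterior_subset hp)
    have hμ0 : (0:ℝ) < μ := by linarith
    have hcombo := riAux.combo_mem_ri hs hp hmem (l := 1/μ)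
      (le_of_lt (by positivity)) (by rw [div_lt_one hμ0]; linarith)
    have he : (1 - 1/μ) • p + (1/μ) • (p + μ • (z - p)) = z := by
      rw [smul_add, smul_smul, one_div, inv_mul_cancel₀ (ne_of_gt hμ0), one_smul, sub_smul,
        one_smul]
      abel
    rwa [he] at hcombo

theorem riAux.ri_image_add {V : Type*} [NormedAddCommGroup V] [NormedSpace ℝ V]
    [FiniteDimensional ℝ V] (a : V) (K : Set V) :
    intrinsicInterior ℝ ((a + ·) '' K) = (a + ·) '' intrinsicInterior ℝ K := by
  have := AffineIsometry.image_intrinsicInterior (𝕜 := ℝ)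
    (AffineIsometryEquiv.constVAdd ℝ V a).toAffineIsometry K
  simpa [funext_iff, vadd_eq_add] using this


open riAux in
/-- Relative interior of the `K`-epigraph of a proper `K`-convex map. -/
theorem relativeInterior_K_epigraph
    (K : Set E₂) (hK_cone : IsCone K) (hK_conv : Convex ℝ K)
    (D : Set E₁) (hD : D.Nonempty) (F : E₁ → E₂)
    (hF : Convex ℝ (epiK K D F)) :
    intrinsicInterior ℝ (epiK K D F)
      = {p : E₁ × E₂ | p.1 ∈ intrinsicInterior ℝ D ∧ p.2 - F p.1 ∈ intrinsicInterior ℝ K} ∧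
    (D = Set.univ →
      intrinsicInterior ℝ (epiK K D F)
        = {p : E₁ × E₂ | p.2 - F p.1 ∈ intrinsicInterior ℝ K}) := by
    classical
  have hmain : intrinsicInterior ℝ (epiK K D F)
      = {p : E₁ × E₂ | p.1 ∈ intrinsicInterior ℝ D ∧ p.2 - F p.1 ∈ intrinsicInterior ℝ K} := by
    rcases Set.eq_empty_or_nonempty K with hKe | hKne
    · have hepi : epiK K D F = ∅ := by
        ext p; simp [epiK, hKe]
      rw [hepi, intrinsicInterior_empty]
      ext p; simp [hKe, intrinsicInterior_empty]
    · -- K nonempty, hence 0 ∈ K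
      have h0K : (0 : E₂) ∈ K := by
        obtain ⟨k, hk⟩ := hKne
        simpa using hK_cone le_rfl hk
      set S := epiK K D F with hSdef
      have hgr : ∀ {x}, x ∈ D → ((x, F x) : E₁ × E₂) ∈ S := fun hx => ⟨hx, by simpa using h0K⟩
      have hSne : S.Nonempty := by
        obtain ⟨x₀, hx₀⟩ := hD
        exact ⟨(x₀, F x₀), hgr hx₀⟩
      have hDconv : Convex ℝ D := by
        intro x₁ h₁ x₂ h₂ a b ha hb hab
        exact (hF (hgr h₁) (hgr h₂) ha hb hab).1
      -- Step B ⊆ : projection of ri S into ri D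
      have hfst : ∀ {p : E₁ × E₂}, p ∈ intrinsicInterior ℝ S → p.1 ∈ intrinsicInterior ℝ D := by
        intro p hp
        rw [mem_ri_iff_prolong hDconv hD]
        have hpS0 : p ∈ S := intrinsicInterior_subset hp
        have hpS : p.1 ∈ D ∧ p.2 - F p.1 ∈ K := hpS0
        refine ⟨hpS.1, fun y hy => ?_⟩
        obtain ⟨μ, hμ, hmem⟩ := ((mem_ri_iff_prolong hF hSne).mp hp).2 (y, F y) (hgr hy)
        refine ⟨μ, hμ, ?_⟩
        have := hmem.1
        simpa using this
      -- Step B ⊇ : each x ∈ ri D has a fiber point in ri S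
      have hexists : ∀ {x : E₁}, x ∈ intrinsicInterior ℝ D →
          ∃ v, ((x, v) : E₁ × E₂) ∈ intrinsicInterior ℝ S := by
        intro x hx
        obtain ⟨p₀, hp₀⟩ := Set.Nonempty.intrinsicInterior hF hSne
        have hp₀S := intrinsicInterior_subset hp₀
        obtain ⟨μ, hμ, hy'⟩ := ((mem_ri_iff_prolong hDconv hD).mp hx).2 p₀.1 hp₀S.1
        have hμ0 : (0:ℝ) < μ := by linarith
        set y' := p₀.1 + μ • (x - p₀.1) with hy'def
        have hq' : ((y', F y') : E₁ × E₂) ∈ S := hgr hy'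
        have hcombo := combo_mem_ri hF hp₀ hq' (l := 1/μ)
          (le_of_lt (by positivity)) (by rw [div_lt_one hμ0]; linarith)
        refine ⟨(1 - 1/μ) • p₀.2 + (1/μ) • F y', ?_⟩
        have he : (1 - 1/μ) • p₀ + (1/μ) • ((y', F y') : E₁ × E₂)
            = (x, (1 - 1/μ) • p₀.2 + (1/μ) • F y') := by
          refine Prod.ext ?_ rfl
          show (1 - 1/μ) • p₀.1 + (1/μ) • y' = x
          rw [hy'def, smul_add, smul_smul, one_div, inv_mul_cancel₀ (ne_of_gt hμ0), one_smul,
            sub_smul, one_smul]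
          abel
        rwa [he] at hcombo
      ext ⟨x, v⟩
      simp only [Set.mem_setOf_eq]
      -- fiber set over x
      constructor
      · intro hp
        have hx : x ∈ intrinsicInterior ℝ D := hfst hp
        refine ⟨hx, ?_⟩
        -- T := fiber over x
        have hxD : x ∈ D := intrinsicInterior_subset hx
        set T : Set E₂ := {v | ((x, v) : E₁ × E₂) ∈ S} with hTdef
        have hTconv : Convex ℝ T := by
          intro v₁ h₁ v₂ h₂ a b ha hb hab
          have e : a • ((x, v₁) : E₁ × E₂) + b • (x, v₂) = (x, a • v₁ + b • v₂) := by
            rw [Prod.smul_mk, Prod.smul_mk, Prod.mk_add_mk, ← add_smul, hab, one_smul]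
          show ((x, a • v₁ + b • v₂) : E₁ × E₂) ∈ S
          exact e ▸ hF h₁ h₂ ha hb hab
        have hvS : ((x, v) : E₁ × E₂) ∈ S := intrinsicInterior_subset hp
        have hTne : T.Nonempty := ⟨v, hvS⟩
        -- v ∈ ri T via prolongation
        have hvT : v ∈ intrinsicInterior ℝ T := by
          rw [mem_ri_iff_prolong hTconv hTne]
          refine ⟨hvS, fun u hu => ?_⟩
          obtain ⟨μ, hμ, hmem⟩ := ((mem_ri_iff_prolong hF hSne).mp hp).2 (x, u) hu
          refine ⟨μ, hμ, ?_⟩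
          have e : ((x, u) : E₁ × E₂) + μ • ((x, v) - (x, u)) = (x, u + μ • (v - u)) := by
            rw [Prod.mk_sub_mk, Prod.smul_mk, Prod.mk_add_mk, sub_self, smul_zero, add_zero]
          rwa [e] at hmem
        -- T = (F x + ·) '' K
        have hTK : T = (F x + ·) '' K := by
          ext u
          simp only [hTdef, Set.mem_setOf_eq, Set.mem_image]
          constructor
          · rintro ⟨-, hu⟩
            exact ⟨u - F x, hu, by abel⟩
          · rintro ⟨k, hk, rfl⟩
            exact ⟨hxD, by simpa using hk⟩
        rw [hTK, ri_image_add] at hvT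
        obtain ⟨k, hk, hke⟩ := hvT
        have : v - F x = k := by
          rw [← hke]; show F x + k - F x = k; rw [add_sub_cancel_left]
        rwa [this]
      · rintro ⟨hx, hk⟩
        have hxD : x ∈ D := intrinsicInterior_subset hx
        set T : Set E₂ := {v | ((x, v) : E₁ × E₂) ∈ S} with hTdef
        have hTconv : Convex ℝ T := by
          intro v₁ h₁ v₂ h₂ a b ha hb hab
          have e : a • ((x, v₁) : E₁ × E₂) + b • (x, v₂) = (x, a • v₁ + b • v₂) := by
            rw [Prod.smul_mk, Prod.smul_mk, Prod.mk_add_mk, ← add_smul, hab, one_smul]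
          show ((x, a • v₁ + b • v₂) : E₁ × E₂) ∈ S
          exact e ▸ hF h₁ h₂ ha hb hab
        obtain ⟨v₀, hv₀⟩ := hexists hx
        have hv₀S : ((x, v₀) : E₁ × E₂) ∈ S := intrinsicInterior_subset hv₀
        have hTne : T.Nonempty := ⟨v₀, hv₀S⟩
        -- v ∈ ri T
        have hvT : v ∈ intrinsicInterior ℝ T := by
          have hTK : T = (F x + ·) '' K := by
            ext u
            simp only [hTdef, Set.mem_setOf_eq, Set.mem_image]
            constructor
            · rintro ⟨-, hu⟩
              exact ⟨u - F x, hu, by abel⟩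
            · rintro ⟨k, hkk, rfl⟩
              exact ⟨hxD, by simpa using hkk⟩
          rw [hTK, ri_image_add]
          refine ⟨v - F x, hk, ?_⟩
          show F x + (v - F x) = v
          rw [add_comm, sub_add_cancel]
        -- use prolongation in T from v₀, then accessibility in S
        obtain ⟨μ, hμ, hmem⟩ := ((mem_ri_iff_prolong hTconv hTne).mp hvT).2 v₀ hv₀S
        have hμ0 : (0:ℝ) < μ := by linarith
        have hu'S : ((x, v₀ + μ • (v - v₀)) : E₁ × E₂) ∈ S := hmem
        have hcombo := combo_mem_ri hF hv₀ hu'S (l := 1/μ)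
          (le_of_lt (by positivity)) (by rw [div_lt_one hμ0]; linarith)
        have he : (1 - 1/μ) • ((x, v₀) : E₁ × E₂) + (1/μ) • (x, v₀ + μ • (v - v₀)) = (x, v) := by
          rw [Prod.smul_mk, Prod.smul_mk, Prod.mk_add_mk]
          refine Prod.ext ?_ ?_
          · show (1 - 1/μ) • x + (1/μ) • x = x
            rw [← add_smul]; simp
          · show (1 - 1/μ) • v₀ + (1/μ) • (v₀ + μ • (v - v₀)) = v
            rw [smul_add, smul_smul, one_div, inv_mul_cancel₀ (ne_of_gt hμ0), one_smul,
              sub_smul, one_smul]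
            abel
        rwa [he] at hcombo
  refine ⟨hmain, fun hDu => ?_⟩
  rw [hmain]
  have hu : intrinsicInterior ℝ (D : Set E₁) = Set.univ := by
    rw [hDu]
    refine Set.univ_subset_iff.mp (subset_trans (le_of_eq interior_univ.symm)
      (interior_subset_intrinsicInterior (𝕜 := ℝ) (s := (Set.univ : Set E₁))))
  ext p
  simp [hu]
end
end

section
/- Let K ⊆ E₂ be a closed, convex cone, let F be a map with nonempty domain dom F ⊆ E₁ and values in E₂ such that the scalarization ⟨v,F⟩ is closed, proper and convex for every v ∈ −K°, and let g : E₂ → ℝ ∪ {+∞} be closed, proper, convex and K-increasing. Then the composite function g ∘ F is closed and convex. If, in addition, rge F ∩ dom g ≠ ∅, then g ∘ F is closed, proper and convex. -/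
open scoped RealInnerProductSpace Pointwise
open Filter

noncomputable section

variable {E E₁ E₂ : Type*}
  [NormedAddCommGroup E] [InnerProductSpace ℝ E] [FiniteDimensional ℝ E]
  [NormedAddCommGroup E₁] [InnerProductSpace ℝ E₁] [FiniteDimensional ℝ E₁]
  [NormedAddCommGroup E₂] [InnerProductSpace ℝ E₂] [FiniteDimensional ℝ E₂]

section AuxFM

variable {Ea : Type*} [NormedAddCommGroup Ea] [InnerProductSpace ℝ Ea] [FiniteDimensional ℝ Ea]

private lemma clm_decomp (f : (Ea × ℝ) →L[ℝ] ℝ) (z : Ea) (r : ℝ) :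
    f (z, r) = f (z, 0) + r * f (0, 1) := by
  have h : (z, r) = (z, (0:ℝ)) + r • ((0:Ea), (1:ℝ)) := by
    simp [Prod.ext_iff]
  rw [h, map_add, map_smul, smul_eq_mul]

/-- If `⟪v,z⟫ - α ≤ g z` for all `z` then `econj g v ≤ α`. -/
private lemma econj_le_of_minorant (g : Ea → EReal) (v : Ea) (α : ℝ)
    (hmin : ∀ z, ((⟪v, z⟫ - α : ℝ) : EReal) ≤ g z) : econj g v ≤ (α : EReal) := by
  refine iSup_le fun z => ?_
  have hb : g z ≠ ⊥ := by
    intro hb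
    have := hmin z
    rw [hb] at this
    exact (EReal.coe_ne_bot _) (le_bot_iff.1 this)
  rw [EReal.sub_le_iff_le_add (Or.inl hb) (Or.inr (EReal.coe_ne_bot α))]
  calc ((⟪v, z⟫ : ℝ) : EReal) = (α : EReal) + ((⟪v, z⟫ - α : ℝ) : EReal) := by
        rw [← EReal.coe_add]; norm_num
    _ ≤ (α : EReal) + g z := by exact add_le_add le_rfl (hmin z)

private lemma term_le_self (g : Ea → EReal) (hbot : ∀ x, g x ≠ ⊥) (v y : Ea) :
    ((⟪v, y⟫ : ℝ) : EReal) - econj g v ≤ g y := by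
  rcases eq_or_ne (g y) ⊤ with h | h
  · rw [h]; exact le_top
  · obtain ⟨r, hr⟩ : ∃ r : ℝ, g y = (r : EReal) := ⟨(g y).toReal, (EReal.coe_toReal h (hbot y)).symm⟩
    have h1 : ((⟪v, y⟫ - r : ℝ) : EReal) ≤ econj g v := by
      have := le_iSup (fun x => ((⟪v, x⟫ : ℝ) : EReal) - g x) y
      rw [hr] at this
      rwa [EReal.coe_sub]
    calc ((⟪v, y⟫ : ℝ) : EReal) - econj g v ≤ ((⟪v, y⟫ : ℝ) : EReal) - ((⟪v, y⟫ - r : ℝ) : EReal) :=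
          EReal.sub_le_sub le_rfl h1
      _ = ((r : ℝ) : EReal) := by rw [← EReal.coe_sub]; norm_num
      _ = g y := hr.symm

/-- An affine minorant of a closed proper convex function, through separation. -/
private lemma exists_affine_minorant (g : Ea → EReal) (hcl : EClosed g) (hcv : EConvexOn g)
    (hbot : ∀ x, g x ≠ ⊥) (y₀ : Ea) (r₀ : ℝ) (hy₀ : g y₀ = (r₀ : EReal)) :
    ∃ (v : Ea) (α : ℝ), ∀ z, ((⟪v, z⟫ - α : ℝ) : EReal) ≤ g z := by
  have hnot : ((y₀, r₀ - 1) : Ea × ℝ) ∉ {p : Ea × ℝ | g p.1 ≤ (p.2 : EReal)} := by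
    intro hmem
    simp only [Set.mem_setOf_eq, hy₀, EReal.coe_le_coe_iff] at hmem
    linarith
  obtain ⟨f, u, hfu, hC⟩ := geometric_hahn_banach_point_closed hcv hcl hnot
  set w : Ea := (InnerProductSpace.toDual ℝ Ea).symm (f.comp (ContinuousLinearMap.inl ℝ Ea ℝ))
  have hw : ∀ z : Ea, f (z, 0) = ⟪w, z⟫ := by
    intro z
    simp [w, InnerProductSpace.toDual_symm_apply]
  set c : ℝ := f (0, 1) with hc_def
  have hmem0 : ((y₀, r₀) : Ea × ℝ) ∈ {p : Ea × ℝ | g p.1 ≤ (p.2 : EReal)} := by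
    simp [Set.mem_setOf_eq, hy₀]
  have h1 : u < ⟪w, y₀⟫ + c * r₀ := by
    have := hC _ hmem0
    rw [clm_decomp, hw, ← hc_def] at this
    linarith
  have h2 : ⟪w, y₀⟫ + c * (r₀ - 1) < u := by
    have := hfu
    rw [clm_decomp, hw, ← hc_def] at this
    linarith
  have hc : 0 < c := by nlinarith
  refine ⟨(-(c⁻¹)) • w, -(u / c), fun z => ?_⟩
  rcases eq_or_ne (g z) ⊤ with h | h
  · rw [h]; exact le_top
  · obtain ⟨s, hs⟩ : ∃ s : ℝ, g z = (s : EReal) := ⟨(g z).toReal, (EReal.coe_toReal h (hbot z)).symm⟩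
    have hmem : ((z, s) : Ea × ℝ) ∈ {p : Ea × ℝ | g p.1 ≤ (p.2 : EReal)} := by
      simp [Set.mem_setOf_eq, hs]
    have h3 : u < ⟪w, z⟫ + c * s := by
      have := hC _ hmem
      rw [clm_decomp, hw, ← hc_def] at this
      linarith
    rw [hs, EReal.coe_le_coe_iff, real_inner_smul_left]
    have : (u - ⟪w, z⟫) / c ≤ s := by
      rw [div_le_iff₀ hc]; nlinarith
    calc -c⁻¹ * ⟪w, z⟫ - -(u / c) = (u - ⟪w, z⟫) / c := by field_simp; ring
      _ ≤ s := this

/-- Fenchel–Moreau: a closed proper convex function is the supremum of its affine minorants. -/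
private lemma fenchel_moreau (g : Ea → EReal) (hcl : EClosed g) (hpr : EProper g)
    (hcv : EConvexOn g) (y : Ea) :
    g y = ⨆ v, (((⟪v, y⟫ : ℝ) : EReal) - econj g v) := by
  obtain ⟨y₀, hy₀top⟩ := hpr.1
  have hbot := hpr.2
  obtain ⟨r₀, hy₀⟩ : ∃ r : ℝ, g y₀ = (r : EReal) :=
    ⟨(g y₀).toReal, (EReal.coe_toReal hy₀top.ne (hbot y₀)).symm⟩
  refine le_antisymm ?_ (iSup_le fun v => term_le_self g hbot v y)
  by_contra hlt
  push_neg at hlt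
  obtain ⟨b, hb1, hb2⟩ := EReal.exists_between_coe_real hlt
  -- separate (y, b) from the epigraph
  have hnot : ((y, b) : Ea × ℝ) ∉ {p : Ea × ℝ | g p.1 ≤ (p.2 : EReal)} := fun hmem =>
    absurd hb2 (not_lt.2 hmem)
  obtain ⟨f, u, hfu, hC⟩ := geometric_hahn_banach_point_closed hcv hcl hnot
  set w : Ea := (InnerProductSpace.toDual ℝ Ea).symm (f.comp (ContinuousLinearMap.inl ℝ Ea ℝ))
  have hw : ∀ z : Ea, f (z, 0) = ⟪w, z⟫ := by
    intro z
    simp [w, InnerProductSpace.toDual_symm_apply]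
  set c : ℝ := f (0, 1) with hc_def
  have hCval : ∀ (z : Ea) (s : ℝ), g z = (s : EReal) → u < ⟪w, z⟫ + c * s := by
    intro z s hs
    have := hC (z, s) (by simp [Set.mem_setOf_eq, hs])
    rw [clm_decomp, hw, ← hc_def] at this
    linarith
  have hfyb : ⟪w, y⟫ + c * b < u := by
    have := hfu
    rw [clm_decomp, hw, ← hc_def] at this
    linarith
  have hc0 : 0 ≤ c := by
    by_contra hneg
    push_neg at hneg
    have h0 := hCval y₀ r₀ hy₀
    have hcne : c ≠ 0 := hneg.ne
    set A : ℝ := ⟪w, y₀⟫ + c * r₀ - u + 1 with hA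
    have hA0 : 0 < A := by linarith
    set t : ℝ := A / (-c) with ht_def
    have ht0 : 0 ≤ t := le_of_lt (div_pos hA0 (by linarith))
    have hct : c * t = -A := by
      rw [ht_def, div_neg, mul_neg, mul_comm, div_mul_cancel₀ _ hcne]
    have hmem : ((y₀, r₀ + t) : Ea × ℝ) ∈ {p : Ea × ℝ | g p.1 ≤ (p.2 : EReal)} := by
      simp only [Set.mem_setOf_eq, hy₀, EReal.coe_le_coe_iff]
      linarith
    have h2 := hC _ hmem
    rw [clm_decomp, hw, ← hc_def] at h2
    have hexp : c * (r₀ + t) = c * r₀ + c * t := by ring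
    nlinarith
  -- a witness achieving value at least b
  have key : ∃ (v : Ea) (α : ℝ), econj g v ≤ (α : EReal) ∧ b ≤ ⟪v, y⟫ - α := by
    rcases hc0.lt_or_eq with hc | hc
    · refine ⟨(-(c⁻¹)) • w, -(u / c), econj_le_of_minorant g _ _ fun z => ?_, ?_⟩
      · rcases eq_or_ne (g z) ⊤ with h | h
        · rw [h]; exact le_top
        · obtain ⟨s, hs⟩ : ∃ s : ℝ, g z = (s : EReal) :=
            ⟨(g z).toReal, (EReal.coe_toReal h (hbot z)).symm⟩
          have h3 := hCval z s hs
          rw [hs, EReal.coe_le_coe_iff, real_inner_smul_left]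
          have : (u - ⟪w, z⟫) / c ≤ s := by
            rw [div_le_iff₀ hc]; nlinarith
          calc -c⁻¹ * ⟪w, z⟫ - -(u / c) = (u - ⟪w, z⟫) / c := by field_simp; ring
            _ ≤ s := this
      · rw [real_inner_smul_left]
        have : b ≤ (u - ⟪w, y⟫) / c := by
          rw [le_div_iff₀ hc]; nlinarith
        calc b ≤ (u - ⟪w, y⟫) / c := this
          _ = -c⁻¹ * ⟪w, y⟫ - -(u / c) := by field_simp; ring
    · -- vertical hyperplane case: c = 0
      obtain ⟨v₁, α₁, hmin⟩ := exists_affine_minorant g hcl hcv hbot y₀ r₀ hy₀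
      have hδ : 0 < u - ⟪w, y⟫ := by rw [← hc] at hfyb; linarith
      set t : ℝ := max 0 ((b - (⟪v₁, y⟫ - α₁)) / (u - ⟪w, y⟫)) with ht_def
      have ht0 : 0 ≤ t := le_max_left _ _
      refine ⟨v₁ - t • w, α₁ - t * u, econj_le_of_minorant g _ _ fun z => ?_, ?_⟩
      · rcases eq_or_ne (g z) ⊤ with h | h
        · rw [h]; exact le_top
        · obtain ⟨s, hs⟩ : ∃ s : ℝ, g z = (s : EReal) :=
            ⟨(g z).toReal, (EReal.coe_toReal h (hbot z)).symm⟩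
          have h3 := hCval z s hs
          rw [← hc] at h3
          have h4 : u < ⟪w, z⟫ := by nlinarith
          have h5 : (⟪v₁, z⟫ - α₁ : ℝ) ≤ s := by
            have := hmin z
            rwa [hs, EReal.coe_le_coe_iff] at this
          rw [hs, EReal.coe_le_coe_iff, inner_sub_left, real_inner_smul_left]
          nlinarith
      · rw [inner_sub_left, real_inner_smul_left]
        have h6 : (b - (⟪v₁, y⟫ - α₁)) / (u - ⟪w, y⟫) ≤ t := le_max_right _ _
        have h7 : b - (⟪v₁, y⟫ - α₁) ≤ t * (u - ⟪w, y⟫) := by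
          rw [div_le_iff₀ hδ] at h6
          linarith
        nlinarith
  obtain ⟨v, α, hconj, hval⟩ := key
  have : (b : EReal) ≤ ((⟪v, y⟫ : ℝ) : EReal) - econj g v := by
    calc (b : EReal) ≤ ((⟪v, y⟫ - α : ℝ) : EReal) := by
          rw [EReal.coe_le_coe_iff]; linarith
      _ ≤ ((⟪v, y⟫ : ℝ) : EReal) - econj g v := by
          rw [EReal.coe_sub]; exact EReal.sub_le_sub le_rfl hconj
  exact absurd (this.trans (le_iSup (fun v => ((⟪v, y⟫ : ℝ) : EReal) - econj g v) v)) (not_le.2 hb1)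

end AuxFM

/-- For a closed convex cone `K`, a map `F` whose scalarizations over `-K°`
are closed, proper and convex, and a closed, proper, convex, `K`-increasing `g`, the composite
`g ∘ F` is closed and convex; if moreover `rge F ∩ dom g ≠ ∅`, it is closed, proper and convex. -/
theorem composite_closed_proper_convex
    (K : Set E₂) (hK_cone : IsCone K) (hK_closed : IsClosed K) (hK_conv : Convex ℝ K)
    (D : Set E₁) (hD : D.Nonempty) (F : E₁ → E₂)
    (hF_scal : ∀ v ∈ -polarCone K,
      EClosed (scal v D F) ∧ EProper (scal v D F) ∧ EConvexOn (scal v D F))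
    (g : E₂ → EReal) (hg_closed : EClosed g) (hg_proper : EProper g) (hg_conv : EConvexOn g)
    (hg_mono : ∀ u v : E₂, v - u ∈ K → g u ≤ g v) :
    EClosed (compFn g D F) ∧ EConvexOn (compFn g D F) ∧
    ((F '' D ∩ edom g).Nonempty →
      EClosed (compFn g D F) ∧ EProper (compFn g D F) ∧ EConvexOn (compFn g D F)) := by
  classical
  obtain ⟨y₀, hy₀top⟩ := hg_proper.1
  have hgbot := hg_proper.2
  obtain ⟨r₀, hy₀⟩ : ∃ r : ℝ, g y₀ = (r : EReal) :=
    ⟨(g y₀).toReal, (EReal.coe_toReal hy₀top.ne (hgbot y₀)).symm⟩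
  -- the conjugate never takes the value ⊥
  have hconj_bot : ∀ v : E₂, econj g v ≠ ⊥ := by
    intro v hb
    have h1 : ((⟪v, y₀⟫ - r₀ : ℝ) : EReal) ≤ econj g v := by
      have := le_iSup (fun x => ((⟪v, x⟫ : ℝ) : EReal) - g x) y₀
      rw [hy₀] at this
      rwa [EReal.coe_sub]
    rw [hb, le_bot_iff] at h1
    exact EReal.coe_ne_bot _ h1
  -- the domain of the conjugate is nonempty
  have hS_ne : ∃ v : E₂, econj g v ≠ ⊤ := by
    by_contra hall
    push_neg at hall
    have hFM := fenchel_moreau g hg_closed hg_proper hg_conv y₀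
    rw [hy₀] at hFM
    have h2 : ∀ v : E₂, ((⟪v, y₀⟫ : ℝ) : EReal) - econj g v = ⊥ := fun v => by
      rw [hall v, sub_eq_add_neg, EReal.neg_top, EReal.add_bot]
    rw [iSup_congr h2, iSup_bot] at hFM
    exact EReal.coe_ne_bot r₀ hFM
  -- the domain of the conjugate lies in -K°
  have hS_pol : ∀ v : E₂, econj g v ≠ ⊤ → v ∈ -polarCone K := by
    intro v hv
    rw [Set.mem_neg]
    intro x hx
    rw [inner_neg_left, neg_nonpos]
    by_contra hneg
    push_neg at hneg
    obtain ⟨cv, hcv⟩ : ∃ r : ℝ, econj g v = (r : EReal) :=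
      ⟨_, (EReal.coe_toReal hv (hconj_bot v)).symm⟩
    have hbound : ∀ t : ℝ, 0 ≤ t → ⟪v, y₀⟫ - t * ⟪v, x⟫ - r₀ ≤ cv := by
      intro t ht
      have hKmem : t • x ∈ K := hK_cone ht hx
      have hmono : g (y₀ - t • x) ≤ (r₀ : EReal) := by
        rw [← hy₀]
        exact hg_mono _ _ (by rw [sub_sub_cancel]; exact hKmem)
      have hterm : ((⟪v, y₀ - t • x⟫ - r₀ : ℝ) : EReal) ≤ econj g v := by
        calc ((⟪v, y₀ - t • x⟫ - r₀ : ℝ) : EReal)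
            = ((⟪v, y₀ - t • x⟫ : ℝ) : EReal) - (r₀ : EReal) := by rw [EReal.coe_sub]
          _ ≤ ((⟪v, y₀ - t • x⟫ : ℝ) : EReal) - g (y₀ - t • x) := EReal.sub_le_sub le_rfl hmono
          _ ≤ econj g v := le_iSup (fun z => ((⟪v, z⟫ : ℝ) : EReal) - g z) _
      rw [hcv, EReal.coe_le_coe_iff, inner_sub_right, real_inner_smul_right] at hterm
      linarith
    set q : ℝ := -⟪v, x⟫ with hq
    have hq0 : 0 < q := by rw [hq]; linarith
    have h0 := hbound 0 le_rfl
    set N : ℝ := cv - ⟪v, y₀⟫ + r₀ + 1 with hN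
    have hN0 : 0 < N := by nlinarith
    have h1 := hbound (N / q) (le_of_lt (div_pos hN0 hq0))
    have h2 : (N / q) * ⟪v, x⟫ = -N := by
      have hvx : ⟪v, x⟫ = -q := by rw [hq]; ring
      rw [hvx, mul_neg, div_mul_cancel₀ _ hq0.ne']
    rw [h2] at h1
    have : cv + 1 ≤ cv := by rw [hN] at h1; linarith
    linarith
  -- the representation of `compFn g D F` as a supremum of shifted scalarizations
  have hrep : ∀ x : E₁, compFn g D F x
      = ⨆ v : {v : E₂ // econj g v ≠ ⊤}, (scal (v : E₂) D F x - econj g (v : E₂)) := by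
    intro x
    by_cases hx : x ∈ D
    · rw [compFn, if_pos hx, fenchel_moreau g hg_closed hg_proper hg_conv (F x)]
      apply le_antisymm
      · refine iSup_le fun v => ?_
        by_cases hv : econj g v = ⊤
        · rw [hv, sub_eq_add_neg, EReal.neg_top, EReal.add_bot]
          exact bot_le
        · refine le_trans ?_ (le_iSup (fun v : {v : E₂ // econj g v ≠ ⊤} =>
            scal (v : E₂) D F x - econj g (v : E₂)) ⟨v, hv⟩)
          rw [scal, if_pos hx]
      · refine iSup_le fun v => ?_
        rw [scal, if_pos hx]
        exact le_iSup (fun v : E₂ => ((⟪v, F x⟫ : ℝ) : EReal) - econj g v) (v : E₂)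
    · rw [compFn, if_neg hx]
      refine le_antisymm ?_ le_top
      obtain ⟨v, hv⟩ := hS_ne
      refine le_trans ?_ (le_iSup (fun v : {v : E₂ // econj g v ≠ ⊤} =>
        scal (v : E₂) D F x - econj g (v : E₂)) ⟨v, hv⟩)
      obtain ⟨cv, hcv⟩ : ∃ r : ℝ, econj g v = (r : EReal) :=
        ⟨_, (EReal.coe_toReal hv (hconj_bot v)).symm⟩
      rw [scal, if_neg hx, hcv, EReal.top_sub_coe]
  -- each shifted scalarization has a closed convex epigraph
  have hepi : ∀ v : E₂, econj g v ≠ ⊤ →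
      IsClosed {p : E₁ × ℝ | scal v D F p.1 - econj g v ≤ (p.2 : EReal)} ∧
      Convex ℝ {p : E₁ × ℝ | scal v D F p.1 - econj g v ≤ (p.2 : EReal)} := by
    intro v hv
    obtain ⟨cv, hcv⟩ : ∃ r : ℝ, econj g v = (r : EReal) :=
      ⟨_, (EReal.coe_toReal hv (hconj_bot v)).symm⟩
    obtain ⟨hscl, -, hscv⟩ := hF_scal v (hS_pol v hv)
    have hset : {p : E₁ × ℝ | scal v D F p.1 - econj g v ≤ (p.2 : EReal)}
        = (fun p : E₁ × ℝ => p + (((0 : E₁), cv) : E₁ × ℝ)) ⁻¹'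
          {p : E₁ × ℝ | scal v D F p.1 ≤ (p.2 : EReal)} := by
      ext p
      simp only [Set.mem_setOf_eq, Set.mem_preimage, Prod.fst_add, Prod.snd_add, add_zero, hcv]
      rw [EReal.sub_le_iff_le_add (Or.inl (EReal.coe_ne_bot cv)) (Or.inl (EReal.coe_ne_top cv)),
        EReal.coe_add]
    constructor
    · rw [hset]
      exact IsClosed.preimage (continuous_id.add continuous_const) hscl
    · rw [hset]
      exact hscv.translate_preimage_left _
  -- the epigraph of `compFn g D F`
  have hepi_eq : {p : E₁ × ℝ | compFn g D F p.1 ≤ (p.2 : EReal)}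
      = ⋂ v : {v : E₂ // econj g v ≠ ⊤},
          {p : E₁ × ℝ | scal (v : E₂) D F p.1 - econj g (v : E₂) ≤ (p.2 : EReal)} := by
    ext p
    simp only [Set.mem_setOf_eq, Set.mem_iInter, hrep p.1, iSup_le_iff, Subtype.forall]
  have hclosed : EClosed (compFn g D F) := by
    rw [EClosed, hepi_eq]
    exact isClosed_iInter fun v => (hepi v v.2).1
  have hconv : EConvexOn (compFn g D F) := by
    rw [EConvexOn, hepi_eq]
    exact convex_iInter fun v => (hepi v v.2).2
  refine ⟨hclosed, hconv, ?_⟩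
  rintro ⟨yy, ⟨x, hxD, hFx⟩, hyy⟩
  refine ⟨hclosed, ⟨⟨x, ?_⟩, ?_⟩, hconv⟩
  · rw [compFn, if_pos hxD, hFx]
    exact hyy
  · intro z
    rw [compFn]
    split_ifs with hz
    · exact hgbot _
    · simp
end
end

section
/- Let K ⊆ E₂ be a closed, convex cone, let F be K-convex with nonempty domain dom F ⊆ E₁, and let g : E₂ → ℝ ∪ {+∞} be proper and convex satisfying condition (M): g(F(x)) ≤ g(y) for every (x,y) ∈ epi_K F. Define η : E₁ → ℝ ∪ {±∞} by η(p) = inf_{v ∈ −K°} (g*(v) + (⟨v,F⟩)*(p)). Then (g ∘ F)* ≤ cl η pointwise. Moreover, equality (g ∘ F)* = cl η holds if, in addition, ⟨v,F⟩ is closed, proper and convex for all v ∈ −K°, g is lower semicontinuous and K-increasing, and rge F ∩ dom g ≠ ∅. -/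
open scoped RealInnerProductSpace Pointwise
open Filter

noncomputable section

variable {E E₁ E₂ : Type*}
  [NormedAddCommGroup E] [InnerProductSpace ℝ E] [FiniteDimensional ℝ E]
  [NormedAddCommGroup E₁] [InnerProductSpace ℝ E₁] [FiniteDimensional ℝ E₁]
  [NormedAddCommGroup E₂] [InnerProductSpace ℝ E₂] [FiniteDimensional ℝ E₂]


lemma er_coe_sub_top (b : ℝ) : (b : EReal) - ⊤ = ⊥ := by
  rw [sub_eq_add_neg, EReal.neg_top, EReal.add_bot]

lemma er_sub_top (x : EReal) : x - ⊤ = ⊥ := by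
  rw [sub_eq_add_neg, EReal.neg_top, EReal.add_bot]

lemma er_coe_sub_bot (b : ℝ) : (b : EReal) - ⊥ = ⊤ := by
  rw [sub_eq_add_neg, EReal.neg_bot, EReal.add_top_of_ne_bot (EReal.coe_ne_bot b)]

lemma er_bot_sub (x : EReal) : ⊥ - x = ⊥ := by
  rw [sub_eq_add_neg, EReal.bot_add]

lemma er_top_sub_coe (b : ℝ) : (⊤ : EReal) - (b : EReal) = ⊤ := by
  rw [sub_eq_add_neg, ← EReal.coe_neg, EReal.top_add_coe]

lemma er_sub_sub_le (b : ℝ) (B : EReal) : (b : EReal) - ((b : EReal) - B) ≤ B := by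
  induction B using EReal.rec with
  | bot => rw [er_coe_sub_bot, er_coe_sub_top]
  | coe c => rw [← EReal.coe_sub, ← EReal.coe_sub]; exact le_of_eq (by norm_num)
  | top => exact le_top

lemma er_le_sub_comm {b : ℝ} {A B : EReal} (h : A ≤ (b : EReal) - B) : B ≤ (b : EReal) - A :=
  calc B = (b : EReal) - ((b:EReal) - B) := by
        induction B using EReal.rec with
        | bot => rw [er_coe_sub_bot, er_coe_sub_top]
        | coe c => rw [← EReal.coe_sub, ← EReal.coe_sub]; norm_num
        | top => rw [er_coe_sub_top, er_coe_sub_bot]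
    _ ≤ (b : EReal) - A := EReal.sub_le_sub le_rfl h

lemma er_eq_top_of_forall_le {x : EReal} (h : ∀ r : ℝ, (r : EReal) ≤ x) : x = ⊤ := by
  by_contra hx
  induction x using EReal.rec with
  | bot => exact absurd (h 0) (by simp)
  | coe c => exact absurd (h (c + 1)) (by exact_mod_cast by linarith : ¬ ((c+1:ℝ):EReal) ≤ (c:EReal))
  | top => exact hx rfl

lemma er_le_of_forall_lt_le {x y : EReal} (h : ∀ r : ℝ, y < r → x ≤ r) : x ≤ y := by
  by_contra hxy
  rcases EReal.exists_between_coe_real (not_le.1 hxy) with ⟨r, hr1, hr2⟩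
  exact absurd (h r hr1) (not_le.2 hr2)

lemma er_le_of_forall_add_eps {x : EReal} {y : ℝ} (h : ∀ ε : ℝ, 0 < ε → x ≤ ((y + ε : ℝ) : EReal)) :
    x ≤ (y : EReal) := by
  by_contra hxy
  rcases EReal.exists_between_coe_real (not_le.1 hxy) with ⟨r, hr1, hr2⟩
  have : x ≤ ((y + (r - y) : ℝ) : EReal) := h _ (by exact_mod_cast sub_pos.2 (by exact_mod_cast hr1))
  rw [show y + (r - y) = r by ring] at this
  exact absurd (lt_of_le_of_lt this hr2) (lt_irrefl x)

lemma er_sub_iInf {ι : Sort*} (b : ℝ) (f : ι → EReal) :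
    (b : EReal) - (⨅ i, f i) = ⨆ i, ((b : EReal) - f i) := by
  apply le_antisymm
  · have h1 : ∀ i, (b : EReal) - (⨆ j, ((b:EReal) - f j)) ≤ f i := fun i =>
      le_trans (EReal.sub_le_sub le_rfl (le_iSup (fun j => (b:EReal) - f j) i)) (er_sub_sub_le b (f i))
    exact le_trans (EReal.sub_le_sub le_rfl (le_iInf h1)) (er_sub_sub_le b _)
  · exact iSup_le fun i => EReal.sub_le_sub le_rfl (iInf_le f i)

lemma er_add_coe_sub_cancel (x : EReal) (g : ℝ) : x + (g : EReal) - (g : EReal) = x := by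
  induction x using EReal.rec with
  | bot => rw [EReal.bot_add, er_bot_sub]
  | coe c => rw [← EReal.coe_add, ← EReal.coe_sub]; norm_num
  | top => rw [EReal.top_add_coe, EReal.top_sub_coe]

lemma er_sub_coe_add_cancel (x : EReal) (g : ℝ) : x - (g : EReal) + (g : EReal) = x := by
  induction x using EReal.rec with
  | bot => rw [er_bot_sub, EReal.bot_add]
  | coe c => rw [← EReal.coe_sub, ← EReal.coe_add]; norm_num
  | top => rw [er_top_sub_coe, EReal.top_add_coe]

lemma er_sub_add (b : ℝ) {c G : EReal} (hc : c ≠ ⊥) (hG : G ≠ ⊥) :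
    (b : EReal) - (c + G) = ((b : EReal) - c) - G := by
  induction c using EReal.rec with
  | bot => exact absurd rfl hc
  | coe c' =>
    induction G using EReal.rec with
    | bot => exact absurd rfl hG
    | coe g' =>
      rw [← EReal.coe_add, ← EReal.coe_sub, ← EReal.coe_sub, ← EReal.coe_sub]
      exact congrArg _ (by ring)
    | top => rw [EReal.add_top_of_ne_bot (EReal.coe_ne_bot c'), er_coe_sub_top, ← EReal.coe_sub, er_coe_sub_top]
  | top =>
    rw [EReal.top_add_of_ne_bot hG, er_coe_sub_top, er_bot_sub]

lemma er_iSup_sub {ι : Sort*} (f : ι → EReal) {G : EReal} (hG : G ≠ ⊥) :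
    (⨆ i, (f i - G)) = (⨆ i, f i) - G := by
  apply le_antisymm
  · exact iSup_le fun i => EReal.sub_le_sub (le_iSup f i) le_rfl
  · induction G using EReal.rec with
    | bot => exact absurd rfl hG
    | coe g =>
      have h1 : ∀ i, f i ≤ (⨆ j, (f j - (g:EReal))) + (g : EReal) := fun i => by
        calc f i = f i - (g:EReal) + (g:EReal) := (er_sub_coe_add_cancel _ _).symm
          _ ≤ _ := add_le_add_left (le_iSup (fun j => f j - (g:EReal)) i) _
      calc (⨆ i, f i) - (g : EReal) ≤ ((⨆ j, (f j - (g:EReal))) + (g:EReal)) - (g:EReal) :=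
            EReal.sub_le_sub (iSup_le h1) le_rfl
        _ ≤ _ := le_of_eq (er_add_coe_sub_cancel _ _)
    | top => rw [er_sub_top]; exact bot_le

/-- The epigraph of an `EReal`-valued function. -/
def epiSet {E : Type*} (f : E → EReal) : Set (E × ℝ) := {p | f p.1 ≤ (p.2 : EReal)}

lemma mem_epiSet {E : Type*} {f : E → EReal} {p : E × ℝ} :
    p ∈ epiSet f ↔ f p.1 ≤ (p.2 : EReal) := Iff.rfl

section SepLemmas

variable {E : Type*} [NormedAddCommGroup E] [InnerProductSpace ℝ E] [FiniteDimensional ℝ E]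

/-- Decompose a continuous linear functional on `E × ℝ`. -/
lemma clm_decomp_s9 (f : (E × ℝ) →L[ℝ] ℝ) :
    ∃ (y : E) (s : ℝ), ∀ p : E × ℝ, f p = ⟪y, p.1⟫ + s * p.2 := by
  refine ⟨(InnerProductSpace.toDual ℝ E).symm (f.comp (ContinuousLinearMap.inl ℝ E ℝ)),
    f (0, 1), fun p => ?_⟩
  have h1 : ⟪(InnerProductSpace.toDual ℝ E).symm (f.comp (ContinuousLinearMap.inl ℝ E ℝ)), p.1⟫
      = f (p.1, 0) := by
    rw [InnerProductSpace.toDual_symm_apply]; rfl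
  have h2 : p = (p.1, 0) + p.2 • ((0 : E), (1 : ℝ)) := by
    simp [Prod.ext_iff]
  rw [h1]
  conv_lhs => rw [h2]
  rw [map_add, map_smul]
  simp [smul_eq_mul, mul_comm]

/-- Separation of a point from a closed convex upward-stable set in `E × ℝ`. -/
lemma sep_point_closed {C : Set (E × ℝ)} (hC : Convex ℝ C) (hcl : IsClosed C)
    (hup : ∀ z : E, ∀ t t' : ℝ, (z, t) ∈ C → t ≤ t' → (z, t') ∈ C)
    (hne : C.Nonempty) {x : E} {r : ℝ} (hx : (x, r) ∉ C) :
    ∃ (y : E) (s c : ℝ), s ≤ 0 ∧ (∀ p ∈ C, ⟪y, p.1⟫ + s * p.2 ≤ c) ∧ c < ⟪y, x⟫ + s * r := by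
  obtain ⟨f, u, hfC, hfx⟩ := geometric_hahn_banach_closed_point hC hcl hx
  obtain ⟨y, s, hf⟩ := clm_decomp_s9 f
  have hfx' : u < ⟪y, x⟫ + s * r := by have := hfx; rw [hf (x, r)] at this; simpa using this
  refine ⟨y, s, u, ?_, fun p hp => ((hf p) ▸ (hfC p hp)).le, hfx'⟩
  by_contra hs
  push_neg at hs
  obtain ⟨⟨z₀, t₀⟩, hz₀⟩ := hne
  set d : ℝ := max 0 ((u - (⟪y, z₀⟫ + s * t₀)) / s + 1) with hd
  have hd0 : 0 ≤ d := le_max_left _ _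
  have hmem : (z₀, t₀ + d) ∈ C := hup z₀ t₀ (t₀ + d) hz₀ (by linarith)
  have hlt := hfC _ hmem
  rw [hf (z₀, t₀ + d)] at hlt
  simp only at hlt
  have hdge : (u - (⟪y, z₀⟫ + s * t₀)) / s + 1 ≤ d := le_max_right _ _
  have : u - (⟪y, z₀⟫ + s * t₀) ≤ s * d := by
    rw [div_add' _ _ _ (ne_of_gt hs)] at hdge
    calc u - (⟪y, z₀⟫ + s * t₀) ≤ u - (⟪y, z₀⟫ + s * t₀) + s := by linarith
      _ ≤ s * d := by
          rw [div_le_iff₀ hs] at hdge; linarith [hdge]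
  nlinarith [hlt]

/-- `f** ≤ f` always. -/
lemma biconj_le (f : E → EReal) (x : E) : econj (econj f) x ≤ f x := by
  refine iSup_le fun y => ?_
  have h : ((⟪x, y⟫ : ℝ) : EReal) - f x ≤ econj f y := by
    have h2 := le_iSup (fun z => ((⟪y, z⟫ : ℝ) : EReal) - f z) x
    have h3 : ((⟪x, y⟫ : ℝ) : EReal) - f x = ((⟪y, x⟫ : ℝ) : EReal) - f x := by
      rw [real_inner_comm]
    exact le_trans (le_of_eq h3) h2
  calc ((⟪x, y⟫ : ℝ) : EReal) - econj f y
      ≤ ((⟪x, y⟫ : ℝ) : EReal) - (((⟪x, y⟫ : ℝ) : EReal) - f x) := EReal.sub_le_sub le_rfl h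
    _ ≤ f x := er_sub_sub_le _ _

lemma econj_le_of_minorant_s9 {f : E → EReal} {y : E} {c : ℝ}
    (h : ∀ z, ((⟪y, z⟫ - c : ℝ) : EReal) ≤ f z) : econj f y ≤ (c : EReal) := by
  refine iSup_le fun z => ?_
  calc ((⟪y, z⟫ : ℝ) : EReal) - f z
      ≤ ((⟪y, z⟫ : ℝ) : EReal) - ((⟪y, z⟫ - c : ℝ) : EReal) := EReal.sub_le_sub le_rfl (h z)
    _ ≤ (c : EReal) := by
        rw [← EReal.coe_sub]
        exact le_of_eq (by norm_num)

/-- Existence of a continuous affine minorant for a closed proper convex function. -/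
lemma exists_affine_minorant_s9 {f : E → EReal} (hcl : EClosed f) (hpr : EProper f)
    (hcv : EConvexOn f) :
    ∃ (y : E) (c : ℝ), ∀ z, ((⟪y, z⟫ - c : ℝ) : EReal) ≤ f z := by
  obtain ⟨⟨x₀, hx₀⟩, hbot⟩ := hpr
  set m : ℝ := (f x₀).toReal with hm
  have hfx₀ : f x₀ = (m : EReal) := (EReal.coe_toReal hx₀.ne (hbot x₀)).symm
  have hnotin : (x₀, m - 1) ∉ epiSet f := by
    intro h
    simp only [mem_epiSet, hfx₀] at h
    exact absurd (EReal.coe_le_coe_iff.1 h) (by norm_num)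
  have hne : (epiSet f : Set (E × ℝ)).Nonempty := ⟨(x₀, m), mem_epiSet.2 hfx₀.le⟩
  obtain ⟨y, s, c, hs, hb, hxr⟩ := sep_point_closed hcv hcl
    (fun z t t' ht htt' => le_trans ht (EReal.coe_le_coe_iff.2 htt')) hne hnotin
  have hsne : s < 0 := by
    rcases lt_or_eq_of_le hs with h | h
    · exact h
    · exfalso
      have h1 := hb (x₀, m) (mem_epiSet.2 hfx₀.le)
      rw [h] at h1 hxr
      simp only [zero_mul, add_zero] at h1 hxr
      linarith
  refine ⟨(-s)⁻¹ • y, (-s)⁻¹ * c, fun z => ?_⟩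
  rcases eq_top_or_lt_top (f z) with htop | hlt
  · exact htop ▸ le_top
  · set a : ℝ := (f z).toReal with ha
    have hfz : f z = (a : EReal) := (EReal.coe_toReal hlt.ne (hbot z)).symm
    have h1 := hb (z, a) (mem_epiSet.2 hfz.le)
    simp only at h1
    have hpos : (0:ℝ) < -s := by linarith
    have key : ((-s)⁻¹ * ⟪y, z⟫ - (-s)⁻¹ * c) ≤ a := by
      rw [show (-s)⁻¹ * ⟪y, z⟫ - (-s)⁻¹ * c = (⟪y, z⟫ - c) / (-s) by
        rw [div_eq_inv_mul, mul_sub]]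
      rw [div_le_iff₀ hpos]
      linarith
    rw [hfz]
    apply EReal.coe_le_coe_iff.2
    rw [real_inner_smul_left]
    exact key

end SepLemmas


section KeyLemmas

variable {E : Type*} [NormedAddCommGroup E] [InnerProductSpace ℝ E] [FiniteDimensional ℝ E]

lemma inv_neg_mul {s : ℝ} (hs : 0 < -s) : (-s)⁻¹ * s = -1 := by
  have h0 : (-s)⁻¹ * (-s) = 1 := inv_mul_cancel₀ (ne_of_gt hs)
  linear_combination -h0

lemma div_trick {s yz a c : ℝ} (hs : 0 < -s) (h : yz + s * a ≤ c) :
    (-s)⁻¹ * yz - a ≤ (-s)⁻¹ * c := by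
  have expand : (-s)⁻¹ * (yz + s * a) = (-s)⁻¹ * yz - a := by
    rw [mul_add, ← mul_assoc, inv_neg_mul hs]; ring
  calc (-s)⁻¹ * yz - a = (-s)⁻¹ * (yz + s * a) := expand.symm
    _ ≤ (-s)⁻¹ * c := mul_le_mul_of_nonneg_left h (le_of_lt (inv_pos.2 hs))

/-- The central separation estimate: if `(x,r)` is not in the closure of the epigraph of a
convex function with an affine minorant, then `r ≤ f**(x)`. -/
lemma biconj_ge_of_not_mem_closure {f : E → EReal}
    (hcv : Convex ℝ (epiSet f)) (hnetop : ∃ z, f z < ⊤)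
    {y₀ : E} {c₀ : ℝ} (hmin : ∀ z, ((⟪y₀, z⟫ - c₀ : ℝ) : EReal) ≤ f z)
    {x : E} {r : ℝ} (hx : (x, r) ∉ closure (epiSet f)) :
    (r : EReal) ≤ econj (econj f) x := by
  have hbot : ∀ z, f z ≠ ⊥ := fun z h => by
    have h2 := hmin z; rw [h] at h2; exact (EReal.coe_ne_bot _) (le_bot_iff.1 h2)
  obtain ⟨z₀, hz₀⟩ := hnetop
  have hz₀' : f z₀ = ((f z₀).toReal : EReal) := (EReal.coe_toReal hz₀.ne (hbot z₀)).symm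
  have hCne : (closure (epiSet f)).Nonempty :=
    ⟨(z₀, (f z₀).toReal), subset_closure (mem_epiSet.2 hz₀'.le)⟩
  have hCco : Convex ℝ (closure (epiSet f)) := hcv.closure
  have hup : ∀ z : E, ∀ t t' : ℝ, (z, t) ∈ closure (epiSet f) → t ≤ t' →
      (z, t') ∈ closure (epiSet f) := by
    intro z t t' hzt htt'
    rcases mem_closure_iff_seq_limit.1 hzt with ⟨u, hu, hconv⟩
    apply mem_closure_iff_seq_limit.2
    refine ⟨fun n => ((u n).1, (u n).2 + (t' - t)), fun n => mem_epiSet.2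
      (le_trans (hu n) (EReal.coe_le_coe_iff.2 (show (u n).2 ≤ (u n).2 + (t' - t) by linarith))), ?_⟩
    have h1 : Tendsto (fun n => (u n).1) atTop (nhds z) := (continuous_fst.tendsto _).comp hconv
    have h2 : Tendsto (fun n => (u n).2 + (t' - t)) atTop (nhds (t + (t' - t))) :=
      ((continuous_snd.tendsto _).comp hconv).add tendsto_const_nhds
    rw [show t + (t' - t) = t' by ring] at h2
    exact h1.prodMk_nhds h2
  obtain ⟨y, s, c, hs, hb, hxr⟩ := sep_point_closed hCco isClosed_closure hup hCne hx
  have hb' : ∀ z (a : ℝ), f z ≤ (a : EReal) → ⟪y, z⟫ + s * a ≤ c := fun z a h =>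
    hb (z, a) (subset_closure (mem_epiSet.2 h))
  rcases lt_or_eq_of_le hs with hslt | hseq
  · -- s < 0
    have hpos : (0:ℝ) < -s := by linarith
    have h1 : econj f ((-s)⁻¹ • y) ≤ (((-s)⁻¹ * c : ℝ) : EReal) := by
      refine iSup_le fun z => ?_
      rcases eq_top_or_lt_top (f z) with htop | hlt
      · rw [htop, er_sub_top]; exact bot_le
      · have hfz : f z = ((f z).toReal : EReal) := (EReal.coe_toReal hlt.ne (hbot z)).symm
        rw [hfz, ← EReal.coe_sub]
        apply EReal.coe_le_coe_iff.2
        rw [real_inner_smul_left]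
        exact div_trick hpos (hb' z _ hfz.le)
    have hrr : r ≤ ⟪(-s)⁻¹ • y, x⟫ - (-s)⁻¹ * c := by
      rw [real_inner_smul_left]
      have h2 := mul_lt_mul_of_pos_left hxr (inv_pos.2 hpos)
      have h3 : (-s)⁻¹ * (⟪y, x⟫ + s * r) = (-s)⁻¹ * ⟪y, x⟫ - r := by
        rw [mul_add, ← mul_assoc, inv_neg_mul hpos]; ring
      rw [h3] at h2
      linarith
    calc (r : EReal) ≤ ((⟪(-s)⁻¹ • y, x⟫ - (-s)⁻¹ * c : ℝ) : EReal) := EReal.coe_le_coe_iff.2 hrr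
      _ = ((⟪x, (-s)⁻¹ • y⟫ : ℝ) : EReal) - (((-s)⁻¹ * c : ℝ) : EReal) := by
          rw [EReal.coe_sub, real_inner_comm]
      _ ≤ ((⟪x, (-s)⁻¹ • y⟫ : ℝ) : EReal) - econj f ((-s)⁻¹ • y) := EReal.sub_le_sub le_rfl h1
      _ ≤ econj (econj f) x := le_iSup (fun w => ((⟪x, w⟫ : ℝ) : EReal) - econj f w) _
  · -- s = 0
    rw [hseq] at hb' hxr
    simp only [zero_mul, add_zero] at hb' hxr
    set ε : ℝ := ⟪y, x⟫ - c with hε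
    have hεpos : 0 < ε := by rw [hε]; linarith
    set lam : ℝ := max 0 ((r + c₀ - ⟪y₀, x⟫) / ε) with hlam
    have hlam0 : 0 ≤ lam := le_max_left _ _
    have h1 : econj f (y₀ + lam • y) ≤ ((c₀ + lam * c : ℝ) : EReal) := by
      refine iSup_le fun z => ?_
      rcases eq_top_or_lt_top (f z) with htop | hlt
      · rw [htop, er_sub_top]; exact bot_le
      · have hfz : f z = ((f z).toReal : EReal) := (EReal.coe_toReal hlt.ne (hbot z)).symm
        have hm := hmin z
        rw [hfz] at hm
        have hm' := EReal.coe_le_coe_iff.1 hm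
        have hcz := hb' z _ hfz.le
        rw [hfz, ← EReal.coe_sub]
        apply EReal.coe_le_coe_iff.2
        rw [inner_add_left, real_inner_smul_left]
        nlinarith [mul_le_mul_of_nonneg_left hcz hlam0]
    have hfinal : r ≤ ⟪x, y₀ + lam • y⟫ - (c₀ + lam * c) := by
      rw [real_inner_comm, inner_add_left, real_inner_smul_left]
      have hge : (r + c₀ - ⟪y₀, x⟫) / ε ≤ lam := le_max_right _ _
      have := (div_le_iff₀ hεpos).1 hge
      nlinarith
    calc (r : EReal) ≤ ((⟪x, y₀ + lam • y⟫ - (c₀ + lam * c) : ℝ) : EReal) :=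
          EReal.coe_le_coe_iff.2 hfinal
      _ = ((⟪x, y₀ + lam • y⟫ : ℝ) : EReal) - ((c₀ + lam * c : ℝ) : EReal) := EReal.coe_sub _ _
      _ ≤ ((⟪x, y₀ + lam • y⟫ : ℝ) : EReal) - econj f (y₀ + lam • y) := EReal.sub_le_sub le_rfl h1
      _ ≤ econj (econj f) x := le_iSup (fun w => ((⟪x, w⟫ : ℝ) : EReal) - econj f w) _

/-- Fenchel–Moreau: biconjugation. -/
lemma fenchelMoreau {f : E → EReal} (hcl : EClosed f) (hpr : EProper f) (hcv : EConvexOn f) :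
    ∀ x, econj (econj f) x = f x := by
  intro x
  refine le_antisymm (biconj_le f x) ?_
  by_contra hlt
  obtain ⟨r, hr1, hr2⟩ := EReal.exists_between_coe_real (not_le.1 hlt)
  have hcl' : IsClosed (epiSet f) := hcl
  have hnotin : (x, r) ∉ closure (epiSet f) := by
    rw [hcl'.closure_eq]
    intro hmem
    exact absurd (mem_epiSet.1 hmem) (not_le.2 hr2)
  obtain ⟨y₀, c₀, hmin⟩ := exists_affine_minorant_s9 hcl hpr hcv
  exact absurd (biconj_ge_of_not_mem_closure hcv hpr.1 hmin hnotin) (not_le.2 hr1)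

lemma econj_ne_bot_of_proper {g : E → EReal} (hg : EProper g) (v : E) : econj g v ≠ ⊥ := by
  obtain ⟨⟨u, hu⟩, hbot⟩ := hg
  have hgu : g u = ((g u).toReal : EReal) := (EReal.coe_toReal hu.ne (hbot u)).symm
  have h1 : ((⟪v, u⟫ - (g u).toReal : ℝ) : EReal) ≤ econj g v := by
    refine le_trans (le_of_eq ?_) (le_iSup (fun z => ((⟪v, z⟫ : ℝ) : EReal) - g z) u)
    rw [EReal.coe_sub]
    conv_rhs => rw [hgu]
  intro hb
  rw [hb] at h1
  exact (EReal.coe_ne_bot _) (le_bot_iff.1 h1)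

lemma lscHull_le_self (f : E → EReal) (x : E) : lscHull f x ≤ f x :=
  sInf_le ⟨fun _ => x, tendsto_const_nhds, tendsto_const_nhds⟩

lemma le_lscHull_of_lsc {h f : E → EReal} (hlsc : LowerSemicontinuous h) (hle : ∀ z, h z ≤ f z)
    (x : E) : h x ≤ lscHull f x := by
  refine le_sInf fun a ha => ?_
  obtain ⟨u, hu, hfu⟩ := ha
  by_contra hca
  obtain ⟨b, hb1, hb2⟩ := EReal.exists_between_coe_real (not_le.1 hca)
  have hev : ∀ᶠ n in atTop, (b : EReal) < h (u n) := hu.eventually (hlsc x _ hb2)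
  have hev' : ∀ᶠ n in atTop, (b : EReal) ≤ f (u n) :=
    hev.mono fun n hn => le_trans hn.le (hle _)
  exact absurd (ge_of_tendsto hfu hev') (not_le.2 hb1)

lemma econj_lsc (f : E → EReal) : LowerSemicontinuous (econj f) := by
  have hrw : econj f = fun y => ⨆ z, ((⟪y, z⟫ : ℝ) : EReal) - f z := rfl
  rw [hrw]
  apply lowerSemicontinuous_iSup
  intro z
  rcases eq_top_or_lt_top (f z) with htop | hlt
  · have h0 : (fun y : E => ((⟪y, z⟫ : ℝ) : EReal) - f z) = fun _ => (⊥ : EReal) :=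
      funext fun y => by rw [htop, er_sub_top]
    rw [h0]; exact lowerSemicontinuous_const
  · rcases eq_bot_or_bot_lt (f z) with hbot | hbot
    · have h0 : (fun y : E => ((⟪y, z⟫ : ℝ) : EReal) - f z) = fun _ => (⊤ : EReal) :=
        funext fun y => by rw [hbot, er_coe_sub_bot]
      rw [h0]; exact lowerSemicontinuous_const
    · have hfz : f z = ((f z).toReal : EReal) := (EReal.coe_toReal hlt.ne hbot.ne').symm
      have h0 : (fun y : E => ((⟪y, z⟫ : ℝ) : EReal) - f z)
          = fun y => ((⟪y, z⟫ - (f z).toReal : ℝ) : EReal) :=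
        funext fun y => by rw [EReal.coe_sub]; conv_lhs => rw [hfz]
      rw [h0]
      exact (continuous_coe_real_ereal.comp
        ((continuous_id.inner continuous_const).sub continuous_const)).lowerSemicontinuous

lemma lscHull_le_of_mem_closure {f : E → EReal} {y₀ : E} {c₀ : ℝ}
    (hmin : ∀ z, ((⟪y₀, z⟫ - c₀ : ℝ) : EReal) ≤ f z)
    {x : E} {r : ℝ} (h : (x, r) ∈ closure (epiSet f)) : lscHull f x ≤ (r : EReal) := by
  have hbot : ∀ z, f z ≠ ⊥ := fun z hz => by
    have h2 := hmin z; rw [hz] at h2; exact (EReal.coe_ne_bot _) (le_bot_iff.1 h2)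
  rcases mem_closure_iff_seq_limit.1 h with ⟨u, hu, hconv⟩
  have h1 : Tendsto (fun n => (u n).1) atTop (nhds x) := (continuous_fst.tendsto _).comp hconv
  have h2 : Tendsto (fun n => (u n).2) atTop (nhds r) := (continuous_snd.tendsto _).comp hconv
  have h3 : Tendsto (fun n => ⟪y₀, (u n).1⟫ - c₀) atTop (nhds (⟪y₀, x⟫ - c₀)) :=
    (((continuous_const.inner continuous_id).sub continuous_const).tendsto x).comp h1
  set a : ℕ → ℝ := fun n => (f (u n).1).toReal with ha
  have hfu : ∀ n, f (u n).1 = (a n : EReal) := fun n =>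
    (EReal.coe_toReal (lt_of_le_of_lt (hu n) (EReal.coe_lt_top _)).ne (hbot _)).symm
  have hlow : ∀ n, ⟪y₀, (u n).1⟫ - c₀ ≤ a n := fun n =>
    EReal.coe_le_coe_iff.1 (by rw [← hfu n]; exact hmin _)
  have hhigh : ∀ n, a n ≤ (u n).2 := fun n =>
    EReal.coe_le_coe_iff.1 (by rw [← hfu n]; exact hu n)
  obtain ⟨m, hm⟩ := h3.bddBelow_range
  obtain ⟨M, hM⟩ := h2.bddAbove_range
  have hbnd : ∀ n, a n ∈ Set.Icc m M := fun n =>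
    ⟨le_trans (hm ⟨n, rfl⟩) (hlow n), le_trans (hhigh n) (hM ⟨n, rfl⟩)⟩
  obtain ⟨L, _, φ, hφ, hL⟩ := tendsto_subseq_of_bounded (isCompact_Icc :
    IsCompact (Set.Icc m M)).isBounded hbnd
  have hLr : L ≤ r :=
    le_of_tendsto_of_tendsto' hL (h2.comp hφ.tendsto_atTop) fun n => hhigh (φ n)
  have hmem : (L : EReal) ∈ {b : EReal | ∃ v : ℕ → E, Tendsto v atTop (nhds x) ∧
      Tendsto (fun n => f (v n)) atTop (nhds b)} := by
    refine ⟨fun n => (u (φ n)).1, h1.comp hφ.tendsto_atTop, ?_⟩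
    have : (fun n => f ((u (φ n)).1)) = fun n => ((a (φ n) : ℝ) : EReal) :=
      funext fun n => hfu (φ n)
    rw [this]
    exact (continuous_coe_real_ereal.tendsto L).comp hL
  exact le_trans (sInf_le hmem) (EReal.coe_le_coe_iff.2 hLr)

end KeyLemmas


section DomainLemmas

variable {E₁ E₂ : Type*}
  [NormedAddCommGroup E₁] [InnerProductSpace ℝ E₁] [FiniteDimensional ℝ E₁]
  [NormedAddCommGroup E₂] [InnerProductSpace ℝ E₂] [FiniteDimensional ℝ E₂]

lemma polarCone_convex (K : Set E₂) : Convex ℝ (polarCone K) := by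
  intro u hu w hw a b ha hb hab
  intro k hk
  have h1 := hu k hk
  have h2 := hw k hk
  have : ⟪a • u + b • w, k⟫ = a * ⟪u, k⟫ + b * ⟪w, k⟫ := by
    rw [inner_add_left, real_inner_smul_left, real_inner_smul_left]
  show ⟪a • u + b • w, k⟫ ≤ 0
  rw [this]
  nlinarith [mul_nonpos_of_nonneg_of_nonpos ha h1, mul_nonpos_of_nonneg_of_nonpos hb h2]

/-- Outside `-K°`, the conjugate of a `K`-increasing proper function is `+∞`. -/
lemma econj_top_of_not_mem {K : Set E₂} (hK_cone : IsCone K) {g : E₂ → EReal}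
    (hg : EProper g) (hinc : ∀ u v : E₂, v - u ∈ K → g u ≤ g v)
    {v : E₂} (hv : v ∉ -polarCone K) : econj g v = ⊤ := by
  apply er_eq_top_of_forall_le
  intro r
  have hv' : ¬(-v ∈ polarCone K) := by rwa [Set.mem_neg] at hv
  obtain ⟨k, hk, hik⟩ : ∃ k ∈ K, ⟪v, k⟫ < 0 := by
    by_contra hcon
    push_neg at hcon
    refine hv' fun x hx => ?_
    have h0 := hcon x hx
    rw [inner_neg_left]
    linarith
  obtain ⟨⟨u, hu⟩, hbot⟩ := hg
  set m : ℝ := (g u).toReal with hmdef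
  have hgu : g u = (m : EReal) := (EReal.coe_toReal hu.ne (hbot u)).symm
  set t : ℝ := max 0 ((m + r - ⟪v, u⟫) / (-⟪v, k⟫)) with htdef
  have ht0 : 0 ≤ t := le_max_left _ _
  have hKmem : u - (u - t • k) ∈ K := by
    rw [show u - (u - t • k) = t • k by abel]
    exact hK_cone ht0 hk
  have hgle : g (u - t • k) ≤ (m : EReal) := by rw [← hgu]; exact hinc _ _ hKmem
  have hip : ⟪v, u - t • k⟫ = ⟪v, u⟫ - t * ⟪v, k⟫ := by
    rw [inner_sub_right, real_inner_smul_right]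
  have hreal : r ≤ ⟪v, u - t • k⟫ - m := by
    rw [hip]
    have hge : (m + r - ⟪v, u⟫) / (-⟪v, k⟫) ≤ t := le_max_right _ _
    have hpos : (0:ℝ) < -⟪v, k⟫ := by linarith
    have := (div_le_iff₀ hpos).1 hge
    nlinarith
  calc (r : EReal) ≤ ((⟪v, u - t • k⟫ - m : ℝ) : EReal) := EReal.coe_le_coe_iff.2 hreal
    _ = ((⟪v, u - t • k⟫ : ℝ) : EReal) - (m : EReal) := EReal.coe_sub _ _
    _ ≤ ((⟪v, u - t • k⟫ : ℝ) : EReal) - g (u - t • k) := EReal.sub_le_sub le_rfl hgle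
    _ ≤ econj g v := le_iSup (fun z => ((⟪v, z⟫ : ℝ) : EReal) - g z) _

/-- Weak duality. -/
lemma weak_duality {D : Set E₁} (F : E₁ → E₂) {g : E₂ → EReal}
    (hbot : ∀ x, g x ≠ ⊥) (v : E₂) (p : E₁) :
    econj (compFn g D F) p ≤ econj g v + econj (scal v D F) p := by
  classical
  refine iSup_le fun x => ?_
  by_cases hxD : x ∈ D
  · rcases eq_top_or_lt_top (g (F x)) with htop | hlt
    · have h0 : compFn g D F x = ⊤ := by rw [compFn, if_pos hxD, htop]
      rw [h0, er_sub_top]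
      exact bot_le
    · set m : ℝ := (g (F x)).toReal with hmdef
      have hgm : g (F x) = (m : EReal) := (EReal.coe_toReal hlt.ne (hbot _)).symm
      have h0 : compFn g D F x = (m : EReal) := by rw [compFn, if_pos hxD, hgm]
      have h1 : ((⟪v, F x⟫ - m : ℝ) : EReal) ≤ econj g v := by
        refine le_trans (le_of_eq ?_) (le_iSup (fun z => ((⟪v, z⟫ : ℝ) : EReal) - g z) (F x))
        rw [EReal.coe_sub, hgm]
      have h2 : ((⟪p, x⟫ - ⟪v, F x⟫ : ℝ) : EReal) ≤ econj (scal v D F) p := by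
        refine le_trans (le_of_eq ?_) (le_iSup (fun z => ((⟪p, z⟫ : ℝ) : EReal) - scal v D F z) x)
        rw [EReal.coe_sub, scal, if_pos hxD]
      calc ((⟪p, x⟫ : ℝ) : EReal) - compFn g D F x
          = ((⟪v, F x⟫ - m : ℝ) + (⟪p, x⟫ - ⟪v, F x⟫ : ℝ) : ℝ) := by
            rw [h0, ← EReal.coe_sub]
            exact congrArg _ (by ring)
        _ = ((⟪v, F x⟫ - m : ℝ) : EReal) + ((⟪p, x⟫ - ⟪v, F x⟫ : ℝ) : EReal) := EReal.coe_add _ _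
        _ ≤ econj g v + econj (scal v D F) p := add_le_add h1 h2
  · have h0 : compFn g D F x = ⊤ := by rw [compFn, if_neg hxD]
    rw [h0, er_sub_top]
    exact bot_le

end DomainLemmas


section EtaLemmas

variable {E₁ E₂ : Type*}
  [NormedAddCommGroup E₁] [InnerProductSpace ℝ E₁] [FiniteDimensional ℝ E₁]
  [NormedAddCommGroup E₂] [InnerProductSpace ℝ E₂] [FiniteDimensional ℝ E₂]

/-- The conjugate of `η` is `g ∘ F`. -/
lemma econj_eta {K : Set E₂} (hK_cone : IsCone K) {D : Set E₁} (F : E₁ → E₂) {g : E₂ → EReal}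
    (hg_proper : EProper g) (hg_conv : EConvexOn g) (hg_cl : EClosed g)
    (hinc : ∀ u v : E₂, v - u ∈ K → g u ≤ g v)
    (hsc : ∀ v ∈ -polarCone K,
      EClosed (scal v D F) ∧ EProper (scal v D F) ∧ EConvexOn (scal v D F))
    (x : E₁) :
    econj (fun q => ⨅ v ∈ -polarCone K, (econj g v + econj (scal v D F) q)) x
      = compFn g D F x := by
  classical
  obtain ⟨y₁, c₁, hy₁min⟩ := exists_affine_minorant_s9 hg_cl hg_proper hg_conv
  have hy₁star : econj g y₁ ≤ (c₁ : EReal) := econj_le_of_minorant_s9 hy₁min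
  have hy₁S : y₁ ∈ -polarCone K := by
    by_contra h
    rw [econj_top_of_not_mem hK_cone hg_proper hinc h] at hy₁star
    exact (EReal.coe_ne_top c₁) (top_le_iff.1 hy₁star)
  have hstep : econj (fun q => ⨅ v ∈ -polarCone K, (econj g v + econj (scal v D F) q)) x
      = ⨆ v : {v : E₂ // v ∈ -polarCone K}, (scal (↑v) D F x - econj g ↑v) := by
    have h1 : econj (fun q => ⨅ v ∈ -polarCone K, (econj g v + econj (scal v D F) q)) x
        = ⨆ p, ⨆ v : {v : E₂ // v ∈ -polarCone K},
            (((⟪x, p⟫ : ℝ) : EReal) - (econj g ↑v + econj (scal (↑v) D F) p)) := by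
      refine iSup_congr fun p => ?_
      show ((⟪x, p⟫ : ℝ) : EReal) - (⨅ v ∈ -polarCone K, (econj g v + econj (scal v D F) p))
        = ⨆ v : {v : E₂ // v ∈ -polarCone K},
            (((⟪x, p⟫ : ℝ) : EReal) - (econj g ↑v + econj (scal (↑v) D F) p))
      rw [iInf_subtype']
      exact er_sub_iInf _ _
    rw [h1, iSup_comm]
    refine iSup_congr fun v => ?_
    have h2 : ∀ p, ((⟪x, p⟫ : ℝ) : EReal) - (econj g ↑v + econj (scal (↑v) D F) p)
        = (((⟪x, p⟫ : ℝ) : EReal) - econj (scal (↑v) D F) p) - econj g ↑v := fun p => by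
      rw [add_comm]
      exact er_sub_add _ (econj_ne_bot_of_proper (hsc ↑v v.2).2.1 p)
        (econj_ne_bot_of_proper hg_proper ↑v)
    calc ⨆ p, (((⟪x, p⟫ : ℝ) : EReal) - (econj g ↑v + econj (scal (↑v) D F) p))
        = ⨆ p, ((((⟪x, p⟫ : ℝ) : EReal) - econj (scal (↑v) D F) p) - econj g ↑v) :=
          iSup_congr h2
      _ = (⨆ p, (((⟪x, p⟫ : ℝ) : EReal) - econj (scal (↑v) D F) p)) - econj g ↑v :=
          er_iSup_sub _ (econj_ne_bot_of_proper hg_proper ↑v)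
      _ = scal (↑v) D F x - econj g ↑v := by
          rw [show (⨆ p, (((⟪x, p⟫ : ℝ) : EReal) - econj (scal (↑v) D F) p))
              = econj (econj (scal (↑v) D F)) x from rfl,
            fenchelMoreau (hsc ↑v v.2).1 (hsc ↑v v.2).2.1 (hsc ↑v v.2).2.2 x]
  rw [hstep]
  by_cases hxD : x ∈ D
  · have hcomp : compFn g D F x = g (F x) := by rw [compFn, if_pos hxD]
    have hg2 : g (F x) = econj (econj g) (F x) :=
      (fenchelMoreau hg_cl hg_proper hg_conv _).symm
    rw [hcomp, hg2]
    apply le_antisymm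
    · refine iSup_le fun v => ?_
      have hscal : scal (↑v : E₂) D F x = ((⟪(↑v : E₂), F x⟫ : ℝ) : EReal) := by
        rw [scal, if_pos hxD]
      rw [hscal, show ((⟪(↑v : E₂), F x⟫ : ℝ) : EReal) = ((⟪F x, (↑v : E₂)⟫ : ℝ) : EReal) by
        rw [real_inner_comm]]
      exact le_iSup (fun w => ((⟪F x, w⟫ : ℝ) : EReal) - econj g w) (↑v : E₂)
    · refine iSup_le fun w => ?_
      by_cases hwS : w ∈ -polarCone K
      · refine le_trans (le_of_eq ?_)
          (le_iSup (fun v : {v : E₂ // v ∈ -polarCone K} => scal (↑v) D F x - econj g ↑v)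
            ⟨w, hwS⟩)
        rw [scal, if_pos hxD, real_inner_comm]
      · rw [econj_top_of_not_mem hK_cone hg_proper hinc hwS, er_sub_top]
        exact bot_le
  · have hcomp : compFn g D F x = ⊤ := by rw [compFn, if_neg hxD]
    rw [hcomp]
    refine le_antisymm le_top ?_
    have hne : econj g y₁ ≠ ⊤ := fun h => (EReal.coe_ne_top c₁) (top_le_iff.1 (h ▸ hy₁star))
    have hnb : econj g y₁ ≠ ⊥ := econj_ne_bot_of_proper hg_proper _
    have hGr : econj g y₁ = ((econj g y₁).toReal : EReal) := (EReal.coe_toReal hne hnb).symm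
    have hscal : scal y₁ D F x = ⊤ := by rw [scal, if_neg hxD]
    have htop : scal y₁ D F x - econj g y₁ = ⊤ := by rw [hscal, hGr, er_top_sub_coe]
    calc (⊤ : EReal) = scal y₁ D F x - econj g y₁ := htop.symm
      _ ≤ _ := le_iSup (fun v : {v : E₂ // v ∈ -polarCone K} => scal (↑v) D F x - econj g ↑v)
          ⟨y₁, hy₁S⟩


lemma eta_convex {K : Set E₂} {D : Set E₁} (F : E₁ → E₂) {g : E₂ → EReal}
    (hg_proper : EProper g)
    (hscp : ∀ v ∈ -polarCone K, EProper (scal v D F)) :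
    EConvexOn (fun q : E₁ => ⨅ v ∈ -polarCone K, (econj g v + econj (scal v D F) q)) := by
  classical
  have hSconv : Convex ℝ (-polarCone K) := (polarCone_convex K).neg
  intro p hp q hq a b ha hb hab
  simp only [Set.mem_setOf_eq] at hp hq
  rcases eq_or_lt_of_le ha with ha0 | ha0
  · have hb1 : b = 1 := by linarith
    have hqq : (0:ℝ) • p + (1:ℝ) • q = q := by rw [zero_smul, one_smul, zero_add]
    rw [← ha0, hb1, hqq]
    exact hq
  rcases eq_or_lt_of_le hb with hb0 | hb0
  · have ha1 : a = 1 := by linarith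
    have hpp : (1:ℝ) • p + (0:ℝ) • q = p := by rw [zero_smul, one_smul, add_zero]
    rw [← hb0, ha1, hpp]
    exact hp
  show (⨅ v' ∈ -polarCone K, (econj g v' + econj (scal v' D F) (a • p.1 + b • q.1)))
      ≤ ((a * p.2 + b * q.2 : ℝ) : EReal)
  apply er_le_of_forall_add_eps
  intro ε hε
  have hp' : (⨅ v ∈ -polarCone K, (econj g v + econj (scal v D F) p.1))
      < ((p.2 + ε : ℝ) : EReal) :=
    lt_of_le_of_lt hp (EReal.coe_lt_coe_iff.2 (by linarith))
  have hq' : (⨅ v ∈ -polarCone K, (econj g v + econj (scal v D F) q.1))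
      < ((q.2 + ε : ℝ) : EReal) :=
    lt_of_le_of_lt hq (EReal.coe_lt_coe_iff.2 (by linarith))
  rw [iInf_subtype'] at hp' hq'
  obtain ⟨v₁, hv₁⟩ := iInf_lt_iff.1 hp'
  obtain ⟨v₂, hv₂⟩ := iInf_lt_iff.1 hq'
  have hG1b : econj g ↑v₁ ≠ ⊥ := econj_ne_bot_of_proper hg_proper _
  have hG2b : econj g ↑v₂ ≠ ⊥ := econj_ne_bot_of_proper hg_proper _
  have hH1b : econj (scal (↑v₁) D F) p.1 ≠ ⊥ := econj_ne_bot_of_proper (hscp ↑v₁ v₁.2) _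
  have hH2b : econj (scal (↑v₂) D F) q.1 ≠ ⊥ := econj_ne_bot_of_proper (hscp ↑v₂ v₂.2) _
  have hG1t : econj g ↑v₁ ≠ ⊤ := fun h => by
    rw [h, EReal.top_add_of_ne_bot hH1b] at hv₁; exact not_top_lt hv₁
  have hG2t : econj g ↑v₂ ≠ ⊤ := fun h => by
    rw [h, EReal.top_add_of_ne_bot hH2b] at hv₂; exact not_top_lt hv₂
  have hH1t : econj (scal (↑v₁) D F) p.1 ≠ ⊤ := fun h => by
    rw [h, EReal.add_top_of_ne_bot hG1b] at hv₁; exact not_top_lt hv₁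
  have hH2t : econj (scal (↑v₂) D F) q.1 ≠ ⊤ := fun h => by
    rw [h, EReal.add_top_of_ne_bot hG2b] at hv₂; exact not_top_lt hv₂
  set G₁ : ℝ := (econj g ↑v₁).toReal with hG₁def
  set G₂ : ℝ := (econj g ↑v₂).toReal with hG₂def
  set H₁ : ℝ := (econj (scal (↑v₁) D F) p.1).toReal with hH₁def
  set H₂ : ℝ := (econj (scal (↑v₂) D F) q.1).toReal with hH₂def
  have hG1 : econj g ↑v₁ = (G₁ : EReal) := (EReal.coe_toReal hG1t hG1b).symm
  have hG2 : econj g ↑v₂ = (G₂ : EReal) := (EReal.coe_toReal hG2t hG2b).symm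
  have hH1 : econj (scal (↑v₁) D F) p.1 = (H₁ : EReal) := (EReal.coe_toReal hH1t hH1b).symm
  have hH2 : econj (scal (↑v₂) D F) q.1 = (H₂ : EReal) := (EReal.coe_toReal hH2t hH2b).symm
  have hsum1 : G₁ + H₁ < p.2 + ε := by
    rw [hG1, hH1, ← EReal.coe_add] at hv₁; exact EReal.coe_lt_coe_iff.1 hv₁
  have hsum2 : G₂ + H₂ < q.2 + ε := by
    rw [hG2, hH2, ← EReal.coe_add] at hv₂; exact EReal.coe_lt_coe_iff.1 hv₂
  set v : E₂ := a • (↑v₁ : E₂) + b • (↑v₂ : E₂) with hvdef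
  have hvS : v ∈ -polarCone K := hSconv v₁.2 v₂.2 ha hb hab
  have key1 : econj g v ≤ ((a * G₁ + b * G₂ : ℝ) : EReal) := by
    refine iSup_le fun u => ?_
    rcases eq_top_or_lt_top (g u) with htop | hlt
    · rw [htop, er_sub_top]; exact bot_le
    · have hgu : g u = ((g u).toReal : EReal) := (EReal.coe_toReal hlt.ne (hg_proper.2 u)).symm
      have hb1 : ⟪(↑v₁ : E₂), u⟫ - (g u).toReal ≤ G₁ := by
        have h : ((⟪(↑v₁ : E₂), u⟫ : ℝ) : EReal) - g u ≤ econj g ↑v₁ :=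
          le_iSup (fun z => ((⟪(↑v₁ : E₂), z⟫ : ℝ) : EReal) - g z) u
        rw [hG1, hgu, ← EReal.coe_sub] at h
        exact EReal.coe_le_coe_iff.1 h
      have hb2 : ⟪(↑v₂ : E₂), u⟫ - (g u).toReal ≤ G₂ := by
        have h : ((⟪(↑v₂ : E₂), u⟫ : ℝ) : EReal) - g u ≤ econj g ↑v₂ :=
          le_iSup (fun z => ((⟪(↑v₂ : E₂), z⟫ : ℝ) : EReal) - g z) u
        rw [hG2, hgu, ← EReal.coe_sub] at h
        exact EReal.coe_le_coe_iff.1 h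
      rw [hgu, ← EReal.coe_sub]
      apply EReal.coe_le_coe_iff.2
      have hexp : ⟪v, u⟫ = a * ⟪(↑v₁ : E₂), u⟫ + b * ⟪(↑v₂ : E₂), u⟫ := by
        rw [hvdef, inner_add_left, real_inner_smul_left, real_inner_smul_left]
      rw [hexp]
      have hm : a * (g u).toReal + b * (g u).toReal = (g u).toReal := by
        rw [← add_mul, hab, one_mul]
      linarith [mul_le_mul_of_nonneg_left hb1 ha0.le, mul_le_mul_of_nonneg_left hb2 hb0.le, hm]
  have key2 : econj (scal v D F) (a • p.1 + b • q.1) ≤ ((a * H₁ + b * H₂ : ℝ) : EReal) := by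
    refine iSup_le fun z => ?_
    by_cases hzD : z ∈ D
    · have hsz : scal v D F z = ((⟪v, F z⟫ : ℝ) : EReal) := by rw [scal, if_pos hzD]
      have hb1 : ⟪p.1, z⟫ - ⟪(↑v₁ : E₂), F z⟫ ≤ H₁ := by
        have h : ((⟪p.1, z⟫ : ℝ) : EReal) - scal (↑v₁) D F z ≤ econj (scal (↑v₁) D F) p.1 :=
          le_iSup (fun w => ((⟪p.1, w⟫ : ℝ) : EReal) - scal (↑v₁) D F w) z
        rw [hH1, scal, if_pos hzD, ← EReal.coe_sub] at h
        exact EReal.coe_le_coe_iff.1 h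
      have hb2 : ⟪q.1, z⟫ - ⟪(↑v₂ : E₂), F z⟫ ≤ H₂ := by
        have h : ((⟪q.1, z⟫ : ℝ) : EReal) - scal (↑v₂) D F z ≤ econj (scal (↑v₂) D F) q.1 :=
          le_iSup (fun w => ((⟪q.1, w⟫ : ℝ) : EReal) - scal (↑v₂) D F w) z
        rw [hH2, scal, if_pos hzD, ← EReal.coe_sub] at h
        exact EReal.coe_le_coe_iff.1 h
      rw [hsz, ← EReal.coe_sub]
      apply EReal.coe_le_coe_iff.2
      have hexp1 : ⟪a • p.1 + b • q.1, z⟫ = a * ⟪p.1, z⟫ + b * ⟪q.1, z⟫ := by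
        rw [inner_add_left, real_inner_smul_left, real_inner_smul_left]
      have hexp2 : ⟪v, F z⟫ = a * ⟪(↑v₁ : E₂), F z⟫ + b * ⟪(↑v₂ : E₂), F z⟫ := by
        rw [hvdef, inner_add_left, real_inner_smul_left, real_inner_smul_left]
      rw [hexp1, hexp2]
      linarith [mul_le_mul_of_nonneg_left hb1 ha0.le, mul_le_mul_of_nonneg_left hb2 hb0.le]
    · have hsz : scal v D F z = ⊤ := by rw [scal, if_neg hzD]
      rw [hsz, er_sub_top]
      exact bot_le
  calc (⨅ v' ∈ -polarCone K, (econj g v' + econj (scal v' D F) (a • p.1 + b • q.1)))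
      ≤ econj g v + econj (scal v D F) (a • p.1 + b • q.1) := iInf₂_le v hvS
    _ ≤ ((a * G₁ + b * G₂ : ℝ) : EReal) + ((a * H₁ + b * H₂ : ℝ) : EReal) := add_le_add key1 key2
    _ = ((a * (G₁ + H₁) + b * (G₂ + H₂) : ℝ) : EReal) := by
        rw [← EReal.coe_add]; exact congrArg _ (by ring)
    _ ≤ ((a * p.2 + b * q.2 + ε : ℝ) : EReal) := by
        apply EReal.coe_le_coe_iff.2
        have he : a * ε + b * ε = ε := by rw [← add_mul, hab, one_mul]
        linarith [mul_lt_mul_of_pos_left hsum1 ha0, mul_lt_mul_of_pos_left hsum2 hb0, he]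

end EtaLemmas

/-- Conjugate of a composite function: with
`η(p) = inf_{v ∈ -K°} (g*(v) + ⟨v,F⟩*(p))` one has `(g ∘ F)* ≤ cl η`, with equality if in
addition the scalarizations are closed, proper and convex, `g` is lsc and `K`-increasing and
`rge F ∩ dom g ≠ ∅`. -/
theorem conjugate_le_lscHull_eta
    (K : Set E₂) (hK_cone : IsCone K) (hK_closed : IsClosed K) (hK_conv : Convex ℝ K)
    (D : Set E₁) (hD : D.Nonempty) (F : E₁ → E₂) (hF : Convex ℝ (epiK K D F))
    (g : E₂ → EReal) (hg_proper : EProper g) (hg_conv : EConvexOn g)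
    (hM : ∀ p ∈ epiK K D F, g (F p.1) ≤ g p.2) :
    (∀ p : E₁,
      econj (compFn g D F) p
        ≤ lscHull (fun q => ⨅ v ∈ -polarCone K, (econj g v + econj (scal v D F) q)) p) ∧
    ((∀ v ∈ -polarCone K,
        EClosed (scal v D F) ∧ EProper (scal v D F) ∧ EConvexOn (scal v D F)) →
      EClosed g → (∀ u v : E₂, v - u ∈ K → g u ≤ g v) → (F '' D ∩ edom g).Nonempty →
      ∀ p : E₁,
        econj (compFn g D F) p
          = lscHull (fun q => ⨅ v ∈ -polarCone K, (econj g v + econj (scal v D F) q)) p) := by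
  classical
  have hgbot : ∀ u, g u ≠ ⊥ := hg_proper.2
  have hweak : ∀ p, econj (compFn g D F) p
      ≤ ⨅ v ∈ -polarCone K, (econj g v + econj (scal v D F) p) := fun p =>
    le_iInf₂ fun v _ => weak_duality F hgbot v p
  have part1 : ∀ p, econj (compFn g D F) p
      ≤ lscHull (fun q => ⨅ v ∈ -polarCone K, (econj g v + econj (scal v D F) q)) p := fun p =>
    le_lscHull_of_lsc (econj_lsc _) hweak p
  refine ⟨part1, ?_⟩
  intro hsc hg_cl hinc hrge p
  obtain ⟨w₀, hw₀⟩ := hrge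
  obtain ⟨x₀, hx₀D, hFx₀⟩ := hw₀.1
  have hdom : g (F x₀) < ⊤ := by rw [hFx₀]; exact hw₀.2
  set m₀ : ℝ := (g (F x₀)).toReal with hm₀
  have hgFx₀ : g (F x₀) = (m₀ : EReal) := (EReal.coe_toReal hdom.ne (hgbot _)).symm
  have hmin : ∀ q, ((⟪x₀, q⟫ - m₀ : ℝ) : EReal)
      ≤ ⨅ v ∈ -polarCone K, (econj g v + econj (scal v D F) q) := fun q => by
    refine le_trans ?_ (hweak q)
    have h1 : ((⟪q, x₀⟫ : ℝ) : EReal) - compFn g D F x₀ ≤ econj (compFn g D F) q :=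
      le_iSup (fun z => ((⟪q, z⟫ : ℝ) : EReal) - compFn g D F z) x₀
    have h2 : compFn g D F x₀ = (m₀ : EReal) := by rw [compFn, if_pos hx₀D, hgFx₀]
    refine le_trans (le_of_eq ?_) h1
    rw [h2, ← EReal.coe_sub, real_inner_comm]
  have hscp : ∀ v ∈ -polarCone K, EProper (scal v D F) := fun v hv => (hsc v hv).2.1
  have hηconv : EConvexOn
      (fun q : E₁ => ⨅ v ∈ -polarCone K, (econj g v + econj (scal v D F) q)) :=
    eta_convex F hg_proper hscp
  obtain ⟨y₁, c₁, hy₁min⟩ := exists_affine_minorant_s9 hg_cl hg_proper hg_conv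
  have hy₁star : econj g y₁ ≤ (c₁ : EReal) := econj_le_of_minorant_s9 hy₁min
  have hy₁S : y₁ ∈ -polarCone K := by
    by_contra h
    rw [econj_top_of_not_mem hK_cone hg_proper hinc h] at hy₁star
    exact (EReal.coe_ne_top c₁) (top_le_iff.1 hy₁star)
  obtain ⟨w₁, c₂, hw₁min⟩ :=
    exists_affine_minorant_s9 (hsc y₁ hy₁S).1 (hsc y₁ hy₁S).2.1 (hsc y₁ hy₁S).2.2
  have hw₁star : econj (scal y₁ D F) w₁ ≤ (c₂ : EReal) := econj_le_of_minorant_s9 hw₁min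
  have hηtop : ∃ q, (fun q => ⨅ v ∈ -polarCone K, (econj g v + econj (scal v D F) q)) q < ⊤ :=
    ⟨w₁, lt_of_le_of_lt (le_trans (iInf₂_le y₁ hy₁S) (add_le_add hy₁star hw₁star))
      (by rw [← EReal.coe_add]; exact EReal.coe_lt_top _)⟩
  have hconj : econj (fun q => ⨅ v ∈ -polarCone K, (econj g v + econj (scal v D F) q))
      = compFn g D F :=
    funext (econj_eta hK_cone F hg_proper hg_conv hg_cl hinc hsc)
  refine le_antisymm (part1 p) ?_
  have hbi : lscHull (fun q => ⨅ v ∈ -polarCone K, (econj g v + econj (scal v D F) q)) p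
      ≤ econj (econj (fun q => ⨅ v ∈ -polarCone K, (econj g v + econj (scal v D F) q))) p := by
    apply er_le_of_forall_lt_le
    intro r hr
    have hmem : (p, r) ∈ closure
        (epiSet (fun q => ⨅ v ∈ -polarCone K, (econj g v + econj (scal v D F) q))) := by
      by_contra hnot
      exact absurd (biconj_ge_of_not_mem_closure
        (f := fun q => ⨅ v ∈ -polarCone K, (econj g v + econj (scal v D F) q))
        hηconv hηtop hmin hnot) (not_le.2 hr)
    exact lscHull_le_of_mem_closure hmin hmem
  rw [hconj] at hbi
  exact hbi
end
end

section
/- Let g : E₂ → ℝ ∪ {+∞}, let F be a map with domain dom F ⊆ E₁ and values in E₂, and let x̄ ∈ dom(g ∘ F). Then ∂(g ∘ F)(x̄) ⊇ ⋃_{v ∈ ∂g(F(x̄))} ∂(⟨v,F⟩)(x̄). Moreover, equality holds if K ⊆ E₂ is a closed, convex cone, F is K-convex, g is proper and convex and satisfies condition (M): g(F(x)) ≤ g(y) for every (x,y) ∈ epi_K F, and F(ri(dom F)) ∩ ri(dom g − K) ≠ ∅. -/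
open scoped RealInnerProductSpace Pointwise
open Filter

noncomputable section

private lemma le_of_forall_pos_mul {a c : ℝ} (h : ∀ t : ℝ, 0 < t → t < 1 → a ≤ t * c) :
    a ≤ 0 := by
  have ht : Tendsto (fun t : ℝ => t * c) (nhdsWithin 0 (Set.Ioi 0)) (nhds 0) := by
    have h0 := (continuous_mul_right c).tendsto 0
    simpa using h0.mono_left nhdsWithin_le_nhds
  refine ge_of_tendsto ht ?_
  filter_upwards [Ioo_mem_nhdsGT_of_mem (by norm_num : (0:ℝ) ∈ Set.Ico 0 1)] with t htm
  exact h t htm.1 htm.2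

private lemma ri_extend {E : Type*} [NormedAddCommGroup E] [NormedSpace ℝ E] {M : Set E} {x z : E}
    (hx : x ∈ intrinsicInterior ℝ M) (hz : z ∈ M) : ∃ ε : ℝ, 0 < ε ∧ x + ε • (x - z) ∈ M := by
  obtain ⟨x', hx', rfl⟩ := hx
  have hzA : z ∈ affineSpan ℝ M := subset_affineSpan ℝ M hz
  have hmem : ∀ t : ℝ, (x' : E) + t • ((x' : E) - z) ∈ affineSpan ℝ M := by
    intro t
    have h2 := AffineSubspace.smul_vsub_vadd_mem (affineSpan ℝ M) t x'.2 hzA x'.2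
    simpa [vsub_eq_sub, vadd_eq_add, add_comm] using h2
  have hcont : Continuous (fun t : ℝ => (⟨(x' : E) + t • ((x' : E) - z), hmem t⟩ :
      affineSpan ℝ M)) := by
    apply Continuous.subtype_mk
    continuity
  have hc0 : (⟨(x' : E) + (0:ℝ) • ((x' : E) - z), hmem 0⟩ : affineSpan ℝ M) ∈
      interior ((↑) ⁻¹' M : Set (affineSpan ℝ M)) := by
    convert hx' using 2
    simp
  have hnh : ∀ᶠ t in nhds (0:ℝ), (⟨(x' : E) + t • ((x' : E) - z), hmem t⟩ : affineSpan ℝ M) ∈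
      interior ((↑) ⁻¹' M : Set (affineSpan ℝ M)) :=
    (hcont.tendsto 0).eventually (isOpen_interior.eventually_mem hc0)
  obtain ⟨δ, hδ, hδ'⟩ := Metric.eventually_nhds_iff.mp hnh
  refine ⟨δ/2, by positivity, ?_⟩
  have h3 := hδ' (y := δ/2) (by rw [Real.dist_eq, sub_zero, abs_of_pos (half_pos hδ)]; linarith)
  exact interior_subset (s := ((↑) ⁻¹' M : Set (affineSpan ℝ M))) h3

private lemma proper_sep {W : Type*} [NormedAddCommGroup W] [NormedSpace ℝ W]
    [FiniteDimensional ℝ W] {C : Set W} (hC : Convex ℝ C) (hne : C.Nonempty)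
    (h0 : (0 : W) ∉ C) :
    ∃ ℓ : W →L[ℝ] ℝ, (∀ z ∈ C, ℓ z ≤ 0) ∧ ∃ z ∈ C, ℓ z < 0 := by
  by_cases h0A : (0 : W) ∈ affineSpan ℝ C
  · -- 0 in the affine span; work with direction + a complement
    set V : Submodule ℝ W := (affineSpan ℝ C).direction with hV
    have hCV : C ⊆ (V : Set W) := by
      intro c hc
      have := AffineSubspace.vsub_mem_direction (subset_affineSpan ℝ C hc) h0A
      simpa [vsub_eq_sub] using this
    obtain ⟨q, hq⟩ := V.exists_isCompl
    set U : Set W := C + (q : Set W) with hU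
    have hUconv : Convex ℝ U := hC.add q.convex
    have h0U : (0 : W) ∉ U := by
      rintro ⟨c, hc, v, hv, hcv⟩
      have hcV : c ∈ V := hCV hc
      have hcq : c ∈ q := by
        have hc' : c = -v := eq_neg_of_add_eq_zero_left hcv
        rw [hc']; exact q.neg_mem hv
      have : c ∈ V ⊓ q := ⟨hcV, hcq⟩
      rw [hq.inf_eq_bot, Submodule.mem_bot] at this
      rw [this] at hc; exact h0 hc
    obtain ⟨c₀, hc₀⟩ := hne
    have hCU : C ⊆ U := fun c hc => ⟨c, hc, 0, q.zero_mem, add_zero c⟩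
    have hUne : U.Nonempty := ⟨c₀, hCU hc₀⟩
    have haff : affineSpan ℝ U = ⊤ := by
      rw [← AffineSubspace.direction_eq_top_iff_of_nonempty
        (hUne.mono (subset_affineSpan ℝ U))]
      rw [direction_affineSpan]
      have hVle : V ≤ vectorSpan ℝ U := by
        rw [hV, direction_affineSpan]
        exact vectorSpan_mono ℝ hCU
      have hqle : q ≤ vectorSpan ℝ U := by
        intro v hv
        have h1 : c₀ + v ∈ U := ⟨c₀, hc₀, v, hv, rfl⟩
        have h2 := vsub_mem_vectorSpan ℝ h1 (hCU hc₀)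
        simpa [vsub_eq_sub] using h2
      have := sup_le hVle hqle
      rw [hq.codisjoint.eq_top] at this
      exact top_le_iff.mp this
    obtain ⟨o, ho⟩ := hUconv.interior_nonempty_iff_affineSpan_eq_top.mpr haff
    obtain ⟨f, hf⟩ := geometric_hahn_banach_open_point hUconv.interior isOpen_interior
      (fun h => h0U (interior_subset h))
    have hfneg : ∀ a ∈ interior U, f a < 0 := by
      intro a ha; have := hf a ha; rwa [map_zero] at this
    have hUle : ∀ u ∈ U, f u ≤ 0 := by
      intro u hu
      apply le_of_forall_pos_mul (c := f u - f o)
      intro t ht ht1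
      have hcombo : t • o + (1 - t) • u ∈ interior U :=
        hUconv.combo_interior_self_mem_interior ho hu ht (by linarith) (by ring)
      have hval := hfneg _ hcombo
      rw [map_add, map_smul, map_smul, smul_eq_mul, smul_eq_mul] at hval
      nlinarith [hval]
    have hq0 : ∀ v ∈ q, f v = 0 := by
      intro v hv
      by_contra hfv
      have hall : ∀ t : ℝ, f c₀ + t * f v ≤ 0 := by
        intro t
        have h1 : c₀ + t • v ∈ U := ⟨c₀, hc₀, t • v, q.smul_mem t hv, rfl⟩
        have := hUle _ h1
        rwa [map_add, map_smul, smul_eq_mul] at this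
      have h2 := hall ((1 - f c₀) / f v)
      rw [div_mul_cancel₀ _ hfv] at h2
      linarith
    obtain ⟨c, hc, v, hv, hcv⟩ := interior_subset ho
    refine ⟨f, fun z hz => hUle z (hCU hz), c, hc, ?_⟩
    have : f o < 0 := hfneg o ho
    rw [← hcv, map_add, hq0 v hv, add_zero] at this
    exact this
  · -- 0 not in the affine span: separate from the closed affine span
    have hclosed : IsClosed ((affineSpan ℝ C : Set W)) :=
      (affineSpan ℝ C).closed_of_finiteDimensional
    obtain ⟨f, u, hfu, hu0⟩ := geometric_hahn_banach_closed_point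
      (AffineSubspace.convex _) hclosed h0A
    rw [map_zero] at hu0
    obtain ⟨c₀, hc₀⟩ := hne
    refine ⟨f, fun z hz => ?_, c₀, hc₀, ?_⟩
    · exact le_of_lt (lt_trans (hfu z (subset_affineSpan ℝ C hz)) hu0)
    · exact lt_trans (hfu c₀ (subset_affineSpan ℝ C hc₀)) hu0

private lemma easy_incl {E₁ E₂ : Type*}
    [NormedAddCommGroup E₁] [InnerProductSpace ℝ E₁]
    [NormedAddCommGroup E₂] [InnerProductSpace ℝ E₂]
    (g : E₂ → EReal) (D : Set E₁) (F : E₁ → E₂) (x₀ : E₁) (hx₀D : x₀ ∈ D) :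
    (⋃ v ∈ esubdiff g (F x₀), esubdiff (scal v D F) x₀) ⊆ esubdiff (compFn g D F) x₀ := by
  intro w hw
  simp only [Set.mem_iUnion] at hw
  obtain ⟨v, hv, hwv⟩ := hw
  simp only [esubdiff, Set.mem_setOf_eq]
  intro x
  by_cases hxD : x ∈ D
  · have h1 : scal v D F x₀ + ((⟪w, x - x₀⟫ : ℝ) : EReal) ≤ scal v D F x := hwv x
    simp only [scal, if_pos hxD, if_pos hx₀D] at h1
    have h1' : ⟪v, F x₀⟫ + ⟪w, x - x₀⟫ ≤ ⟪v, F x⟫ := by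
      rw [← EReal.coe_add] at h1; exact_mod_cast h1
    have h2 : g (F x₀) + ((⟪v, F x - F x₀⟫ : ℝ) : EReal) ≤ g (F x) := hv (F x)
    simp only [compFn, if_pos hxD, if_pos hx₀D]
    calc g (F x₀) + ((⟪w, x - x₀⟫ : ℝ) : EReal)
        ≤ g (F x₀) + ((⟪v, F x - F x₀⟫ : ℝ) : EReal) := by
          apply add_le_add le_rfl
          have h3 : ⟪w, x - x₀⟫ ≤ ⟪v, F x - F x₀⟫ := by
            simp only [inner_sub_right] at h1' ⊢; linarith
          exact_mod_cast h3
      _ ≤ g (F x) := h2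
  · simp only [compFn, if_neg hxD]; exact le_top

variable {E E₁ E₂ : Type*}
  [NormedAddCommGroup E] [InnerProductSpace ℝ E] [FiniteDimensional ℝ E]
  [NormedAddCommGroup E₁] [InnerProductSpace ℝ E₁] [FiniteDimensional ℝ E₁]
  [NormedAddCommGroup E₂] [InnerProductSpace ℝ E₂] [FiniteDimensional ℝ E₂]

/-- Subdifferential of a composite function:
`∂(g ∘ F)(x₀) ⊇ ⋃_{v ∈ ∂g(F(x₀))} ∂⟨v,F⟩(x₀)`, with equality if `K` is a closed convex cone,
`F` is `K`-convex, `g` is proper, convex, satisfies condition (M) and the qualification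
condition `F(ri(dom F)) ∩ ri(dom g - K) ≠ ∅` holds. -/
theorem subdifferential_of_composite
    (g : E₂ → EReal) (D : Set E₁) (F : E₁ → E₂)
    (x₀ : E₁) (hx₀D : x₀ ∈ D) (hx₀ : compFn g D F x₀ < ⊤) :
    (⋃ v ∈ esubdiff g (F x₀), esubdiff (scal v D F) x₀) ⊆ esubdiff (compFn g D F) x₀ ∧
    (∀ K : Set E₂, IsCone K → IsClosed K → Convex ℝ K → Convex ℝ (epiK K D F) →
      EProper g → EConvexOn g →
      (∀ p ∈ epiK K D F, g (F p.1) ≤ g p.2) →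
      (F '' intrinsicInterior ℝ D ∩ intrinsicInterior ℝ (edom g - K)).Nonempty →
      esubdiff (compFn g D F) x₀ = ⋃ v ∈ esubdiff g (F x₀), esubdiff (scal v D F) x₀) := by
  constructor
  · exact easy_incl g D F x₀ hx₀D
  · intro K hKcone hKcl hKconv hepi hproper hgconv hM hqual
    refine Set.Subset.antisymm ?_ (easy_incl g D F x₀ hx₀D)
    intro w hw
    have hw' : ∀ x, compFn g D F x₀ + ((⟪w, x - x₀⟫ : ℝ) : EReal) ≤ compFn g D F x := hw
    have hγfin : compFn g D F x₀ = g (F x₀) := by simp [compFn, hx₀D]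
    obtain ⟨ytil, hytil⟩ := hqual
    obtain ⟨⟨xtil, hxri, hFxt⟩, hyri⟩ := hytil
    have hxtD : xtil ∈ D := intrinsicInterior_subset hxri
    have hyM : ytil ∈ edom g - K := intrinsicInterior_subset hyri
    have h0K : (0 : E₂) ∈ K := by
      obtain ⟨a, -, b, hb, -⟩ := hyM
      have := hKcone le_rfl hb; simpa using this
    have hgx₀ne : g (F x₀) ≠ ⊥ := hproper.2 _
    have hgx₀lt : g (F x₀) < ⊤ := by rwa [hγfin] at hx₀
    set γ : ℝ := (g (F x₀)).toReal with hγdef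
    have hγ : g (F x₀) = (γ : EReal) := (EReal.coe_toReal hgx₀lt.ne hgx₀ne).symm
    have hsubw : ∀ x ∈ D, (γ : EReal) + ((⟪w, x - x₀⟫ : ℝ) : EReal) ≤ g (F x) := by
      intro x hxD
      have h1 := hw' x
      rw [hγfin, hγ] at h1
      simpa [compFn, hxD] using h1
    set S : Set (E₂ × ℝ) := {p | ∃ x ∈ D, p.1 - F x ∈ K ∧ p.2 ≤ ⟪w, x - x₀⟫} with hSdef
    set T : Set (E₂ × ℝ) := {p | g p.1 < ((γ + p.2 : ℝ) : EReal)} with hTdef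
    have addK : ∀ k₁ ∈ K, ∀ k₂ ∈ K, k₁ + k₂ ∈ K := by
      intro k₁ h₁ k₂ h₂
      have h3 : (1/2 : ℝ) • k₁ + (1/2 : ℝ) • k₂ ∈ K :=
        hKconv h₁ h₂ (by norm_num) (by norm_num) (by norm_num)
      have h4 := hKcone (by norm_num : (0:ℝ) ≤ 2) h3
      rw [smul_add, smul_smul, smul_smul] at h4
      norm_num at h4; exact h4
    have hSconv : Convex ℝ S := by
      rintro p hp q hq a b ha hb hab
      simp only [hSdef, Set.mem_setOf_eq] at hp hq ⊢
      obtain ⟨xp, hxp, hkp, h2p⟩ := hp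
      obtain ⟨xq, hxq, hkq, h2q⟩ := hq
      have hep : (xp, F xp) ∈ epiK K D F := ⟨hxp, by simpa using h0K⟩
      have heq : (xq, F xq) ∈ epiK K D F := ⟨hxq, by simpa using h0K⟩
      have hcombo := hepi hep heq ha hb hab
      simp only [Prod.smul_mk, Prod.mk_add_mk] at hcombo
      obtain ⟨hxD', hk₀⟩ := hcombo
      refine ⟨a • xp + b • xq, hxD', ?_, ?_⟩
      · have h5 : a • (p.1 - F xp) + b • (q.1 - F xq) ∈ K := hKconv hkp hkq ha hb hab
        have h6 := addK _ h5 _ hk₀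
        have h7 : (a • p + b • q).1 - F (a • xp + b • xq) =
            (a • (p.1 - F xp) + b • (q.1 - F xq)) +
              (a • F xp + b • F xq - F (a • xp + b • xq)) := by
          simp only [Prod.fst_add, Prod.smul_fst]
          module
        rw [h7]; exact h6
      · have h8 : (a • p + b • q).2 = a * p.2 + b * q.2 := by
          simp only [Prod.snd_add, Prod.smul_snd, smul_eq_mul]
        rw [h8]
        have h9 : ⟪w, (a • xp + b • xq) - x₀⟫ =
            a * ⟪w, xp - x₀⟫ + b * ⟪w, xq - x₀⟫ := by
          simp only [inner_sub_right, inner_add_right, real_inner_smul_right]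
          linear_combination (⟪w, x₀⟫ : ℝ) * hab
        rw [h9]
        nlinarith [mul_le_mul_of_nonneg_left h2p ha, mul_le_mul_of_nonneg_left h2q hb]
    have hTconv : Convex ℝ T := by
      rintro p hp q hq a b ha hb hab
      simp only [hTdef, Set.mem_setOf_eq] at hp hq ⊢
      have hpt : g p.1 < ⊤ := lt_trans hp (EReal.coe_lt_top _)
      have hqt : g q.1 < ⊤ := lt_trans hq (EReal.coe_lt_top _)
      set rp : ℝ := (g p.1).toReal with hrpdef
      set rq : ℝ := (g q.1).toReal with hrqdef
      have hrp : g p.1 = (rp : EReal) := (EReal.coe_toReal hpt.ne (hproper.2 _)).symm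
      have hrq : g q.1 = (rq : EReal) := (EReal.coe_toReal hqt.ne (hproper.2 _)).symm
      have hrp' : rp < γ + p.2 := by rw [hrp] at hp; exact_mod_cast hp
      have hrq' : rq < γ + q.2 := by rw [hrq] at hq; exact_mod_cast hq
      have hmp : ((p.1, rp) : E₂ × ℝ) ∈ {p : E₂ × ℝ | g p.1 ≤ (p.2 : EReal)} := hrp.le
      have hmq : ((q.1, rq) : E₂ × ℝ) ∈ {p : E₂ × ℝ | g p.1 ≤ (p.2 : EReal)} := hrq.le
      have hmem := hgconv hmp hmq ha hb hab
      simp only [Prod.smul_mk, Prod.mk_add_mk, Set.mem_setOf_eq, smul_eq_mul] at hmem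
      have hfst : (a • p + b • q).1 = a • p.1 + b • q.1 := by
        simp only [Prod.fst_add, Prod.smul_fst]
      have hsnd : (a • p + b • q).2 = a * p.2 + b * q.2 := by
        simp only [Prod.snd_add, Prod.smul_snd, smul_eq_mul]
      rw [hfst, hsnd]
      refine lt_of_le_of_lt hmem ?_
      rw [EReal.coe_lt_coe_iff]
      rcases ha.lt_or_eq with hapos | ha0
      · have hm1 := mul_lt_mul_of_pos_left hrp' hapos
        have hm2 := mul_le_mul_of_nonneg_left hrq'.le hb
        have hγc : a * γ + b * γ = γ := by rw [← add_mul, hab, one_mul]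
        linarith
      · have hb1 : b = 1 := by rw [← ha0] at hab; linarith
        rw [← ha0, hb1]; simp; linarith
    have hdisj : ∀ p : E₂ × ℝ, p ∈ S → p ∈ T → False := by
      intro p hpS hpT
      simp only [hSdef, Set.mem_setOf_eq] at hpS
      simp only [hTdef, Set.mem_setOf_eq] at hpT
      obtain ⟨x, hxD, hk, h2⟩ := hpS
      have hMx : g (F x) ≤ g p.1 := hM (x, p.1) ⟨hxD, hk⟩
      have hsub := hsubw x hxD
      have h3 : ((γ + p.2 : ℝ) : EReal) ≤ (γ : EReal) + ((⟪w, x - x₀⟫ : ℝ) : EReal) := by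
        rw [← EReal.coe_add]
        exact_mod_cast (by linarith : γ + p.2 ≤ γ + ⟪w, x - x₀⟫)
      exact absurd (lt_of_lt_of_le hpT (le_trans h3 (le_trans hsub hMx))) (lt_irrefl _)
    have hCconv : Convex ℝ (S - T) := hSconv.sub hTconv
    have hs₀ : ((F x₀, 0) : E₂ × ℝ) ∈ S := by
      simp only [hSdef, Set.mem_setOf_eq]
      exact ⟨x₀, hx₀D, by simpa using h0K, by simp⟩
    have hTpt : ∀ t : ℝ, 0 < t → ((F x₀, t) : E₂ × ℝ) ∈ T := by
      intro t ht
      simp only [hTdef, Set.mem_setOf_eq]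
      rw [hγ]
      exact_mod_cast (by linarith : γ < γ + t)
    have hCne : (S - T).Nonempty := ⟨_, Set.sub_mem_sub hs₀ (hTpt 1 one_pos)⟩
    have hC0 : (0 : E₂ × ℝ) ∉ S - T := by
      rintro ⟨s, hs, t, ht, hst⟩
      exact hdisj t ((sub_eq_zero.mp hst) ▸ hs) ht
    obtain ⟨ℓ, hℓle, zstar, hzC, hzlt⟩ := proper_sep hCconv hCne hC0
    have hsep : ∀ s ∈ S, ∀ t ∈ T, ℓ s ≤ ℓ t := by
      intro s hs t ht
      have := hℓle _ (Set.sub_mem_sub hs ht)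
      rwa [map_sub, sub_nonpos] at this
    have hstrict : ∃ s ∈ S, ∃ t ∈ T, ℓ s < ℓ t := by
      obtain ⟨s, hs, t, ht, rfl⟩ := hzC
      rw [map_sub, sub_neg] at hzlt
      exact ⟨s, hs, t, ht, hzlt⟩
    set u : E₂ := (InnerProductSpace.toDual ℝ E₂).symm
      (ℓ.comp (ContinuousLinearMap.inl ℝ E₂ ℝ)) with hu
    set β : ℝ := ℓ (0, 1) with hβ
    have hℓeq : ∀ p : E₂ × ℝ, ℓ p = ⟪u, p.1⟫ + p.2 * β := by
      intro p
      have h1 : ⟪u, p.1⟫ = ℓ (p.1, 0) := by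
        rw [hu]; exact InnerProductSpace.toDual_symm_apply
      have h2 : ℓ (0, p.2) = p.2 * β := by
        have h3 : ((0 : E₂), p.2) = p.2 • ((0 : E₂), (1 : ℝ)) := by
          simp [Prod.smul_mk]
        rw [h3, map_smul, smul_eq_mul, hβ]
      have h4 : p = (p.1, 0) + (0, p.2) := by simp
      rw [h4, map_add, ← h1, h2]
      simp
    set α : ℝ := ⟪u, F x₀⟫ with hα
    have hℓs₀ : ℓ (F x₀, 0) = α := by rw [hℓeq]; simp; exact hα.symm
    have hβnonneg : 0 ≤ β := by
      have h1 := hsep _ hs₀ _ (hTpt 1 one_pos)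
      rw [hℓeq, hℓeq] at h1
      simp at h1; linarith
    have hSα : ∀ s ∈ S, ℓ s ≤ α := by
      intro s hs
      have key : ∀ t : ℝ, 0 < t → t < 1 → ℓ s - α ≤ t * β := by
        intro t ht _
        have h1 := hsep s hs _ (hTpt t ht)
        rw [hℓeq (F x₀, t)] at h1
        simp only at h1
        linarith
      have := le_of_forall_pos_mul key
      linarith
    have hTα : ∀ t ∈ T, α ≤ ℓ t := by
      intro t ht
      have := hsep _ hs₀ t ht
      rwa [hℓs₀] at this
    rcases hβnonneg.lt_or_eq with hβpos | hβ0
    · -- β > 0 : construct v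
      set v : E₂ := (-β⁻¹) • u with hv
      have hinner : ∀ y : E₂, ⟪v, y - F x₀⟫ = (α - ⟪u, y⟫) / β := by
        intro y
        rw [hv]
        simp only [real_inner_smul_left, inner_sub_right, hα]
        field_simp
        ring
      simp only [Set.mem_iUnion]
      refine ⟨v, ?_, ?_⟩
      · simp only [esubdiff, Set.mem_setOf_eq]
        intro y
        by_cases hgy : g y < ⊤
        · set r : ℝ := (g y).toReal with hrdef
          have hgy' : g y = (r : EReal) := (EReal.coe_toReal hgy.ne (hproper.2 _)).symm
          have hclaim : γ + (α - ⟪u, y⟫) / β ≤ r := by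
            have key : ∀ t : ℝ, 0 < t → t < 1 → γ + (α - ⟪u, y⟫) / β - r ≤ t * 1 := by
              intro t ht _
              have hyt : ((y, r - γ + t) : E₂ × ℝ) ∈ T := by
                simp only [hTdef, Set.mem_setOf_eq]
                rw [hgy']
                exact_mod_cast (by linarith : r < γ + (r - γ + t))
              have h1 := hTα _ hyt
              rw [hℓeq] at h1
              simp only at h1
              have h6 : (α - ⟪u, y⟫) / β ≤ r - γ + t := by
                rw [div_le_iff₀ hβpos]; nlinarith
              linarith
            have := le_of_forall_pos_mul key
            linarith
          rw [hγ, hgy', ← EReal.coe_add, EReal.coe_le_coe_iff]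
          rw [hinner]
          linarith
        · have htop : g y = ⊤ := top_le_iff.mp (not_lt.mp hgy)
          rw [htop]; exact le_top
      · simp only [esubdiff, Set.mem_setOf_eq]
        intro x
        by_cases hxD : x ∈ D
        · simp only [scal, if_pos hxD, if_pos hx₀D]
          rw [← EReal.coe_add, EReal.coe_le_coe_iff]
          have hsx : ((F x, ⟪w, x - x₀⟫) : E₂ × ℝ) ∈ S := by
            simp only [hSdef, Set.mem_setOf_eq]
            exact ⟨x, hxD, by simpa using h0K, le_refl _⟩
          have h7 := hSα _ hsx
          rw [hℓeq] at h7
          simp only at h7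
          have h8 : ⟪w, x - x₀⟫ ≤ (α - ⟪u, F x⟫) / β := by
            rw [le_div_iff₀ hβpos]; nlinarith
          have h9 := hinner (F x)
          rw [inner_sub_right] at h9
          linarith
        · simp only [scal, if_neg hxD]; exact le_top
    · -- β = 0 : contradiction with qualification
      exfalso
      have hβz : β = 0 := hβ0.symm
      have hℓ0 : ∀ p : E₂ × ℝ, ℓ p = ⟪u, p.1⟫ := by
        intro p; rw [hℓeq, hβz]; simp
      have hSu : ∀ x ∈ D, ∀ k ∈ K, ⟪u, F x + k⟫ ≤ α := by
        intro x hxD k hk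
        have hsx : ((F x + k, ⟪w, x - x₀⟫) : E₂ × ℝ) ∈ S := by
          simp only [hSdef, Set.mem_setOf_eq]
          exact ⟨x, hxD, by simpa using hk, le_refl _⟩
        have := hSα _ hsx
        rwa [hℓ0] at this
      have hKle : ∀ k ∈ K, ⟪u, k⟫ ≤ 0 := by
        intro k hk
        have := hSu x₀ hx₀D k hk
        rw [inner_add_right] at this
        rw [hα] at this
        linarith
      have hdom : ∀ y : E₂, g y < ⊤ → α ≤ ⟪u, y⟫ := by
        intro y hy
        set r : ℝ := (g y).toReal with hrdef
        have hgy' : g y = (r : EReal) := (EReal.coe_toReal hy.ne (hproper.2 _)).symm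
        have hyt : ((y, r - γ + 1) : E₂ × ℝ) ∈ T := by
          simp only [hTdef, Set.mem_setOf_eq]
          rw [hgy']
          exact_mod_cast (by linarith : r < γ + (r - γ + 1))
        have := hTα _ hyt
        rwa [hℓ0] at this
      have hMge : ∀ z ∈ edom g - K, α ≤ ⟪u, z⟫ := by
        rintro z ⟨y, hy, k, hk, rfl⟩
        rw [inner_sub_right]
        have h1 := hdom y hy
        have h2 := hKle k hk
        linarith
      have hFxtle : ⟪u, F xtil⟫ ≤ α := by
        have := hSu xtil hxtD 0 h0K
        simpa using this
      have hFxtα : ⟪u, F xtil⟫ = α := by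
        refine le_antisymm hFxtle ?_
        have := hMge ytil hyM
        rwa [← hFxt] at this
      have hMconst : ∀ z ∈ edom g - K, ⟪u, z⟫ = α := by
        intro z hz
        refine le_antisymm ?_ (hMge z hz)
        obtain ⟨ε, hε, hmem⟩ := ri_extend hyri hz
        have h1 := hMge _ hmem
        rw [inner_add_right, real_inner_smul_right, inner_sub_right] at h1
        have hyα : ⟪u, ytil⟫ = α := by rw [← hFxt]; exact hFxtα
        nlinarith
      have hK0 : ∀ k ∈ K, ⟪u, k⟫ = 0 := by
        intro k hk
        have h1 : F x₀ - k ∈ edom g - K :=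
          ⟨F x₀, (show g (F x₀) < ⊤ from hgx₀lt), k, hk, rfl⟩
        have h2 := hMconst _ h1
        rw [inner_sub_right] at h2
        rw [hα] at h2
        linarith
      have hgconst : ∀ y : E₂, g y < ⊤ → ⟪u, y⟫ = α := by
        intro y hy
        have := hMconst (y - 0) ⟨y, hy, 0, h0K, rfl⟩
        simpa using this
      obtain ⟨s, hsS, t, htT, hlt⟩ := hstrict
      have htdom : g t.1 < ⊤ := by
        simp only [hTdef, Set.mem_setOf_eq] at htT
        exact lt_trans htT (EReal.coe_lt_top _)
      have hℓt : ℓ t = α := by rw [hℓ0]; exact hgconst _ htdom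
      simp only [hSdef, Set.mem_setOf_eq] at hsS
      obtain ⟨x₁, hx₁D, hk₁, -⟩ := hsS
      have hsval : ℓ s = ⟪u, F x₁⟫ + ⟪u, s.1 - F x₁⟫ := by
        rw [hℓ0, ← inner_add_right, add_sub_cancel]
      have hx₁lt : ⟪u, F x₁⟫ < α := by
        have h1 := hK0 _ hk₁
        rw [hsval, h1, add_zero] at hlt
        rw [hℓt] at hlt
        exact hlt
      obtain ⟨ε, hε, hx'D⟩ := ri_extend hxri hx₁D
      set x' : E₁ := xtil + ε • (xtil - x₁) with hx'
      set a : ℝ := 1 / (1 + ε) with hadef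
      set b : ℝ := ε / (1 + ε) with hbdef
      have h1ε : (0 : ℝ) < 1 + ε := by linarith
      have hapos : 0 < a := by rw [hadef]; positivity
      have hbpos : 0 < b := by rw [hbdef]; positivity
      have hab : a + b = 1 := by rw [hadef, hbdef]; field_simp
      have hba : b = a * ε := by rw [hadef, hbdef]; field_simp
      have hcomb : a • x' + b • x₁ = xtil := by
        rw [hx', hadef, hbdef]
        match_scalars <;> field_simp <;> ring
      have hex' : (x', F x') ∈ epiK K D F := ⟨hx'D, by simpa using h0K⟩
      have hex₁ : (x₁, F x₁) ∈ epiK K D F := ⟨hx₁D, by simpa using h0K⟩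
      have hco := hepi hex' hex₁ hapos.le hbpos.le hab
      simp only [Prod.smul_mk, Prod.mk_add_mk] at hco
      obtain ⟨-, hkc⟩ := hco
      rw [hcomb] at hkc
      have h0c := hK0 _ hkc
      rw [inner_sub_right, inner_add_right, real_inner_smul_right,
        real_inner_smul_right] at h0c
      have hle' : ⟪u, F x'⟫ ≤ α := by
        have := hSu x' hx'D 0 h0K
        simpa using this
      have hm1 := mul_le_mul_of_nonneg_left hle' hapos.le
      have hm2 := mul_lt_mul_of_pos_left hx₁lt hbpos
      have hαc : a * α + b * α = α := by rw [← add_mul, hab, one_mul]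
      linarith [h0c, hFxtα, hm1, hm2, hαc]
end
end
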